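/- arXiv:0806.1212 — 10 statements merged into one kernel-verified Lean document; each statement's English description precedes it below -/
import Mathlib

section
/- Let K be a category with all equalizers and (N ⊣ R) an adjunction with N : K → C, unit η and counit ε. Then the pair (Id_K, η) is the equalizer of the parallel natural transformations RNη and ηRN : RN → RNRN if and only if η is a regular monomorphism in the functor category (equivalently, each component ηA is a regular monomorphism in K). -/
open CategoryTheory CategoryTheory.Limits

/-- For an adjunction `N ⊣ R` with `K` having equalizers, `(Id_K, η)` is the equalizer of
`RNη` and `ηRN` if and only if `η` is a regular monomorphism in the functor category. -/
theorem stmt4 {K C : Type*} [Category K] [Category C] [HasEqualizers K]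
    (N : K ⥤ C) (R : C ⥤ K) (adj : N ⊣ R) :
    Nonempty (IsLimit (Fork.ofι adj.unit
      (show adj.unit ≫
          (Functor.whiskerRight adj.unit (N ⋙ R) : N ⋙ R ⟶ (N ⋙ R) ⋙ N ⋙ R) =
        adj.unit ≫
          (Functor.whiskerLeft (N ⋙ R) adj.unit : N ⋙ R ⟶ (N ⋙ R) ⋙ N ⋙ R) by
        ext X
        simp only [NatTrans.comp_app, Functor.whiskerRight_app, Functor.whiskerLeft_app]
        exact (adj.unit.naturality (adj.unit.app X)).symm))) ↔
    Nonempty (RegularMono adj.unit) := by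
  constructor
  · rintro ⟨h⟩
    exact ⟨{ Z := (N ⋙ R) ⋙ N ⋙ R
             left := Functor.whiskerRight adj.unit (N ⋙ R)
             right := Functor.whiskerLeft (N ⋙ R) adj.unit
             w := by
               ext X
               simp only [NatTrans.comp_app, Functor.whiskerRight_app, Functor.whiskerLeft_app]
               exact (adj.unit.naturality (adj.unit.app X)).symm
             isLimit := h }⟩
  · rintro ⟨h⟩
    haveI : Mono adj.unit := h.mono
    -- each component of the unit is a mono
    have hmono : ∀ Y : K, Mono (adj.unit.app Y) := by
      intro Y
      exact mono_of_isLimit_fork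
        (isLimitForkMapOfIsLimit ((evaluation K K).obj Y) h.w h.isLimit)
    -- key: any fork over (RNη, ηRN) equalizes (h.left, h.right)
    have key : ∀ (s : Fork (Functor.whiskerRight adj.unit (N ⋙ R) : N ⋙ R ⟶ (N ⋙ R) ⋙ N ⋙ R)
        (Functor.whiskerLeft (N ⋙ R) adj.unit)), s.ι ≫ h.left = s.ι ≫ h.right := by
      intro s
      have hcond := s.condition
      ext X
      have hX : s.ι.app X ≫ (N ⋙ R).map (adj.unit.app X)
          = s.ι.app X ≫ adj.unit.app ((N ⋙ R).obj X) := by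
        have := congrArg (fun t => NatTrans.app t X) hcond
        simpa using this
      have hw : adj.unit.app X ≫ h.left.app X = adj.unit.app X ≫ h.right.app X := by
        have := congrArg (fun t => NatTrans.app t X) h.w
        simpa using this
      have nl : h.left.app X ≫ adj.unit.app (h.Z.obj X)
          = adj.unit.app ((N ⋙ R).obj X) ≫ (N ⋙ R).map (h.left.app X) := by
        simpa using adj.unit.naturality (h.left.app X)
      have nr : h.right.app X ≫ adj.unit.app (h.Z.obj X)
          = adj.unit.app ((N ⋙ R).obj X) ≫ (N ⋙ R).map (h.right.app X) := by
        simpa using adj.unit.naturality (h.right.app X)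
      haveI := hmono (h.Z.obj X)
      rw [NatTrans.comp_app, NatTrans.comp_app]
      apply (cancel_mono (adj.unit.app (h.Z.obj X))).mp
      calc (s.ι.app X ≫ h.left.app X) ≫ adj.unit.app (h.Z.obj X)
          = s.ι.app X ≫ adj.unit.app ((N ⋙ R).obj X) ≫ (N ⋙ R).map (h.left.app X) := by
            rw [Category.assoc, nl]
        _ = s.ι.app X ≫ (N ⋙ R).map (adj.unit.app X) ≫ (N ⋙ R).map (h.left.app X) := by
            rw [← Category.assoc, ← Category.assoc, hX]
        _ = s.ι.app X ≫ (N ⋙ R).map (adj.unit.app X ≫ h.left.app X) := by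
            rw [Functor.map_comp]
        _ = s.ι.app X ≫ (N ⋙ R).map (adj.unit.app X ≫ h.right.app X) := by rw [hw]
        _ = s.ι.app X ≫ (N ⋙ R).map (adj.unit.app X) ≫ (N ⋙ R).map (h.right.app X) := by
            rw [Functor.map_comp]
        _ = s.ι.app X ≫ adj.unit.app ((N ⋙ R).obj X) ≫ (N ⋙ R).map (h.right.app X) := by
            rw [← Category.assoc, ← Category.assoc, hX]
        _ = (s.ι.app X ≫ h.right.app X) ≫ adj.unit.app (h.Z.obj X) := by
            rw [Category.assoc, nr]
    refine ⟨Fork.IsLimit.mk _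
      (fun s => h.isLimit.lift (Fork.ofι s.ι (key s))) (fun s => ?_) (fun s m hm => ?_)⟩
    · exact h.isLimit.fac (Fork.ofι s.ι (key s)) WalkingParallelPair.zero
    · have hfac : h.isLimit.lift (Fork.ofι s.ι (key s)) ≫ adj.unit = s.ι :=
        h.isLimit.fac (Fork.ofι s.ι (key s)) WalkingParallelPair.zero
      apply (cancel_mono adj.unit).mp
      rw [hfac]
      exact hm
end

section
/- Consider a serially commutative 3×3 diagram in a category K, with rows A → B ⇉ C, A' → B' ⇉ C', A'' → B'' ⇉ C'' and columns A → A' ⇉ A'', B → B' ⇉ B'', C → C' ⇉ C''. If all three columns are equalizers and the second and third rows are equalizers, then the first row is an equalizer. -/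
open CategoryTheory CategoryTheory.Limits

/-- A 3×3 lemma for equalizers: in a serially commutative diagram whose columns are equalizers
and whose second and third rows are equalizers, the first row is an equalizer. -/
theorem stmt5 {K : Type*} [Category K]
    {A B C A' B' C' A'' B'' C'' : K}
    -- rows
    (i : A ⟶ B) (f g : B ⟶ C)
    (i' : A' ⟶ B') (f' g' : B' ⟶ C')
    (i'' : A'' ⟶ B'') (f'' g'' : B'' ⟶ C'')
    -- columns
    (e : A ⟶ A') (n m : A' ⟶ A'')
    (e' : B ⟶ B') (n' m' : B' ⟶ B'')
    (e'' : C ⟶ C') (n'' m'' : C' ⟶ C'')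
    -- serial commutativity
    (sq1 : i ≫ e' = e ≫ i')
    (sq2f : f ≫ e'' = e' ≫ f') (sq2g : g ≫ e'' = e' ≫ g')
    (sq3n : i' ≫ n' = n ≫ i'') (sq3m : i' ≫ m' = m ≫ i'')
    (sq4fn : f' ≫ n'' = n' ≫ f'') (sq4gn : g' ≫ n'' = n' ≫ g'')
    (sq4fm : f' ≫ m'' = m' ≫ f'') (sq4gm : g' ≫ m'' = m' ≫ g'')
    -- columns are equalizers
    (we : e ≫ n = e ≫ m) (he : IsLimit (Fork.ofι e we))
    (we' : e' ≫ n' = e' ≫ m') (he' : IsLimit (Fork.ofι e' we'))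
    (we'' : e'' ≫ n'' = e'' ≫ m'') (he'' : IsLimit (Fork.ofι e'' we''))
    -- the second and third rows are equalizers
    (wi' : i' ≫ f' = i' ≫ g') (hi' : IsLimit (Fork.ofι i' wi'))
    (wi'' : i'' ≫ f'' = i'' ≫ g'') (hi'' : IsLimit (Fork.ofι i'' wi'')) :
    ∃ wi : i ≫ f = i ≫ g, Nonempty (IsLimit (Fork.ofι i wi)) := by
  have wi : i ≫ f = i ≫ g := by
    apply Fork.IsLimit.hom_ext he''
    simp only [Fork.ι_ofι, Category.assoc]
    calc i ≫ f ≫ e'' = i ≫ e' ≫ f' := by rw [sq2f]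
      _ = e ≫ i' ≫ f' := by rw [← Category.assoc, sq1, Category.assoc]
      _ = e ≫ i' ≫ g' := by rw [wi']
      _ = i ≫ e' ≫ g' := by rw [← Category.assoc, ← sq1, Category.assoc]
      _ = i ≫ g ≫ e'' := by rw [sq2g]
  refine ⟨wi, ⟨Fork.IsLimit.mk' _ fun s => ?_⟩⟩
  have hs : s.ι ≫ f = s.ι ≫ g := s.condition
  have h1 : (s.ι ≫ e') ≫ f' = (s.ι ≫ e') ≫ g' := by
    rw [Category.assoc, Category.assoc, ← sq2f, ← sq2g, ← Category.assoc, ← Category.assoc, hs]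
  obtain ⟨t, ht⟩ := Fork.IsLimit.lift' hi' (s.ι ≫ e') h1
  simp only [Fork.ι_ofι] at ht
  have h2 : t ≫ n = t ≫ m := by
    apply Fork.IsLimit.hom_ext hi''
    simp only [Fork.ι_ofι, Category.assoc]
    calc t ≫ n ≫ i'' = t ≫ i' ≫ n' := by rw [sq3n]
      _ = s.ι ≫ e' ≫ n' := by rw [← Category.assoc, ht, Category.assoc]
      _ = s.ι ≫ e' ≫ m' := by rw [we']
      _ = t ≫ i' ≫ m' := by rw [← Category.assoc, ← ht, Category.assoc]
      _ = t ≫ m ≫ i'' := by rw [sq3m]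
  obtain ⟨u, hu⟩ := Fork.IsLimit.lift' he t h2
  simp only [Fork.ι_ofι] at hu
  refine ⟨u, ?_, ?_⟩
  · apply Fork.IsLimit.hom_ext he'
    simp only [Fork.ι_ofι]
    calc (u ≫ i) ≫ e' = u ≫ i ≫ e' := by rw [Category.assoc]
      _ = u ≫ e ≫ i' := by rw [sq1]
      _ = t ≫ i' := by rw [← Category.assoc, hu]
      _ = s.ι ≫ e' := ht
  · intro v hv
    apply Fork.IsLimit.hom_ext he
    apply Fork.IsLimit.hom_ext hi'
    simp only [Fork.ι_ofι] at hv ⊢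
    calc (v ≫ e) ≫ i' = v ≫ i ≫ e' := by rw [Category.assoc, ← sq1]
      _ = s.ι ≫ e' := by rw [← Category.assoc, hv]
      _ = t ≫ i' := ht.symm
      _ = (u ≫ e) ≫ i' := by rw [hu]
end

section
/- Let G, G' : C → K be functors and γ, θ : G → G' natural transformations, where K has all equalizers, and let (E, i) be the equalizer of γ and θ in the functor category. If G and G' both preserve equalizers, then the functor E preserves equalizers. -/
open CategoryTheory CategoryTheory.Limits

lemma aux6 {C K : Type*} [Category C] [Category K] [HasEqualizers K]
    (G G' : C ⥤ K) (γ θ : G ⟶ G')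
    [PreservesLimitsOfShape WalkingParallelPair G]
    [PreservesLimitsOfShape WalkingParallelPair G']
    (E : C ⥤ K) (i : E ⟶ G) (w : i ≫ γ = i ≫ θ)
    (hE : IsLimit (Fork.ofι i w))
    {X Y : C} (f g : X ⟶ Y) : PreservesLimit (parallelPair f g) E := by
  constructor
  intro c hc
  -- pointwise equalizer forks
  have hpt : ∀ Z : C, IsLimit (Fork.ofι (i.app Z)
      (by exact congrArg (fun η => NatTrans.app η Z) w) : Fork (γ.app Z) (θ.app Z)) := fun Z =>
    isLimitForkMapOfIsLimit ((evaluation C K).obj Z) w hE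
  have hc' : IsLimit (Fork.ofι (Fork.ι c) (Fork.condition c)) :=
    hc.ofIsoLimit (Fork.isoForkOfι c)
  have hG : IsLimit (Fork.ofι (G.map (Fork.ι c))
      (by rw [← G.map_comp, ← G.map_comp, Fork.condition]) : Fork (G.map f) (G.map g)) :=
    isLimitForkMapOfIsLimit G (Fork.condition c) hc'
  have hG' : IsLimit (Fork.ofι (G'.map (Fork.ι c))
      (by rw [← G'.map_comp, ← G'.map_comp, Fork.condition]) : Fork (G'.map f) (G'.map g)) :=
    isLimitForkMapOfIsLimit G' (Fork.condition c) hc'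
  haveI mιX : Mono (i.app X) := mono_of_isLimit_fork (hpt X)
  haveI mιP : Mono (i.app c.pt) := mono_of_isLimit_fork (hpt c.pt)
  haveI mG : Mono (G.map (Fork.ι c)) := mono_of_isLimit_fork hG
  haveI mG' : Mono (G'.map (Fork.ι c)) := mono_of_isLimit_fork hG'
  refine ⟨IsLimit.ofIsoLimit ((isLimitMapConeForkEquiv E (Fork.condition c)).symm ?_)
    ((Cones.functoriality _ E).mapIso (Fork.isoForkOfι c).symm)⟩
  apply Fork.IsLimit.mk'
  intro t
  have hu : (t.ι ≫ i.app X) ≫ G.map f = (t.ι ≫ i.app X) ≫ G.map g := by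
    rw [Category.assoc, Category.assoc, ← i.naturality f, ← i.naturality g,
      ← Category.assoc, ← Category.assoc, t.condition]
  obtain ⟨v, hv⟩ := Fork.IsLimit.lift' hG (t.ι ≫ i.app X) hu
  simp only [Fork.ι_ofι] at hv
  have hvγθ : v ≫ γ.app c.pt = v ≫ θ.app c.pt := by
    rw [← cancel_mono (G'.map (Fork.ι c))]
    rw [Category.assoc, Category.assoc, ← γ.naturality, ← θ.naturality,
      ← Category.assoc, ← Category.assoc, hv, Category.assoc, Category.assoc]
    have := congrArg (fun η => NatTrans.app η X) w
    simp only [NatTrans.comp_app] at this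
    exact congrArg (fun k => t.ι ≫ k) this
  obtain ⟨l, hl⟩ := Fork.IsLimit.lift' (hpt c.pt) v hvγθ
  change l ≫ i.app c.pt = v at hl
  have hnat : E.map (Fork.ι c) ≫ i.app X = i.app c.pt ≫ G.map (Fork.ι c) := i.naturality _
  refine ⟨l, ?_, ?_⟩
  · rw [← cancel_mono (i.app X)]
    simp only [Fork.ι_ofι]
    rw [Category.assoc, hnat, ← Category.assoc, hl, hv]
  · intro m hm
    simp only [Fork.ι_ofι] at hm
    rw [← cancel_mono (i.app c.pt), hl, ← cancel_mono (G.map (Fork.ι c)), hv,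
      Category.assoc, ← hnat, ← Category.assoc, hm]

/-- If `G` and `G'` preserve equalizers, then the (pointwise) equalizer `E` of a pair of
natural transformations `γ, θ : G ⟶ G'` preserves equalizers. -/
theorem stmt6 {C K : Type*} [Category C] [Category K] [HasEqualizers K]
    (G G' : C ⥤ K) (γ θ : G ⟶ G')
    [PreservesLimitsOfShape WalkingParallelPair G]
    [PreservesLimitsOfShape WalkingParallelPair G']
    (E : C ⥤ K) (i : E ⟶ G) (w : i ≫ γ = i ≫ θ)
    (hE : IsLimit (Fork.ofι i w)) :
    Nonempty (PreservesLimitsOfShape WalkingParallelPair E) := by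
  refine ⟨⟨fun {F} => ?_⟩⟩
  have : PreservesLimit (parallelPair (F.map WalkingParallelPairHom.left)
      (F.map WalkingParallelPairHom.right)) E := aux6 G G' γ θ E i w hE _ _
  exact preservesLimit_of_iso_diagram E (diagramIsoParallelPair F).symm
end

section
/- Let K be a category with coequalizers, α : A → T a morphism of monads on K such that both underlying endofunctors A and T preserve coequalizers. Let (N_A ⊣ R_A) be the canonical adjunction induced by α. Then the Eilenberg–Moore comparison functor K_T → (K_A)_{R_A N_A} is an isomorphism of categories. -/
open CategoryTheory CategoryTheory.Limits

namespace Stmt10Aux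

open CategoryTheory.Monad

variable {K : Type*} [Category K]

lemma algebra_ext {M : Monad K} {X Y : M.Algebra} (h : X.A = Y.A) (h2 : HEq X.a Y.a) : X = Y := by
  cases X; cases Y; cases h; cases h2; rfl

lemma alg_hom_hext {M : Monad K} {X X' Y Y' : M.Algebra} (hX : X = X') (hY : Y = Y')
    {f : X ⟶ Y} {g : X' ⟶ Y'} (hf : HEq f.f g.f) : HEq f g := by
  subst hX; subst hY
  exact heq_of_eq (Monad.Algebra.Hom.ext (eq_of_heq hf))

lemma eqToHom_f {M : Monad K} {X Y : M.Algebra} (h : X = Y) :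
    (eqToHom h).f = eqToHom (congrArg Monad.Algebra.A h) := by
  subst h; rfl

section

variable {A T : Monad K} (α : A ⟶ T) {N : A.Algebra ⥤ T.Algebra}
  (adj : N ⊣ algebraFunctorOfMonadHom α)

/-- The candidate `T`-algebra structure on the carrier of an algebra over the induced monad. -/
def gs (Ph : adj.toMonad.Algebra) : (T : K ⥤ K).obj Ph.A.A ⟶ Ph.A.A :=
  (T : K ⥤ K).map (adj.unit.app Ph.A).f ≫ ((N.obj Ph.A).a ≫ Ph.a.f)

lemma gs_unit_aux (Ph : adj.toMonad.Algebra) :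
    (adj.unit.app Ph.A).f ≫ Ph.a.f = 𝟙 Ph.A.A :=
  congrArg Monad.Algebra.Hom.f Ph.unit

lemma gs_unit (Ph : adj.toMonad.Algebra) : T.η.app Ph.A.A ≫ gs α adj Ph = 𝟙 Ph.A.A := by
  have h1 : T.η.app Ph.A.A ≫ (T : K ⥤ K).map (adj.unit.app Ph.A).f
      = (adj.unit.app Ph.A).f ≫ T.η.app ((N.obj Ph.A).A) := (T.η.naturality _).symm
  have h2 : T.η.app ((N.obj Ph.A).A) ≫ (N.obj Ph.A).a = 𝟙 _ := (N.obj Ph.A).unit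
  erw [gs, ← Category.assoc, h1, Category.assoc, ← Category.assoc (T.η.app ((N.obj Ph.A).A)),
    h2, Category.id_comp]
  exact gs_unit_aux α adj Ph

lemma gs_key (Ph : adj.toMonad.Algebra) :
    (T : K ⥤ K).map Ph.a.f ≫ gs α adj Ph = (N.obj Ph.A).a ≫ Ph.a.f := by
  have h1 : Ph.a.f ≫ (adj.unit.app Ph.A).f
      = (adj.unit.app (adj.toMonad.obj Ph.A)).f ≫ (N.map Ph.a).f :=
    congrArg Monad.Algebra.Hom.f (adj.unit.naturality Ph.a)
  have h2 : (T : K ⥤ K).map (N.map Ph.a).f ≫ (N.obj Ph.A).a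
      = (N.obj (adj.toMonad.obj Ph.A)).a ≫ (N.map Ph.a).f := (N.map Ph.a).h
  have h3 : (N.map Ph.a).f ≫ Ph.a.f = (adj.counit.app (N.obj Ph.A)).f ≫ Ph.a.f :=
    (congrArg Monad.Algebra.Hom.f Ph.assoc).symm
  have h4 : (N.obj (adj.toMonad.obj Ph.A)).a ≫ (adj.counit.app (N.obj Ph.A)).f
      = (T : K ⥤ K).map (adj.counit.app (N.obj Ph.A)).f ≫ (N.obj Ph.A).a :=
    ((adj.counit.app (N.obj Ph.A)).h).symm
  have h5 : (adj.unit.app (adj.toMonad.obj Ph.A)).f ≫ (adj.counit.app (N.obj Ph.A)).f = 𝟙 _ :=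
    congrArg Monad.Algebra.Hom.f (adj.right_triangle_components (N.obj Ph.A))
  calc (T : K ⥤ K).map Ph.a.f ≫ gs α adj Ph
      = (T : K ⥤ K).map (Ph.a.f ≫ (adj.unit.app Ph.A).f) ≫ ((N.obj Ph.A).a ≫ Ph.a.f) := by
        erw [Functor.map_comp, Category.assoc]; rfl
    _ = (T : K ⥤ K).map (adj.unit.app (adj.toMonad.obj Ph.A)).f ≫
          ((T : K ⥤ K).map (N.map Ph.a).f ≫ (N.obj Ph.A).a) ≫ Ph.a.f := by
        erw [h1, Functor.map_comp]; (repeat erw [Category.assoc]); rfl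
    _ = (T : K ⥤ K).map (adj.unit.app (adj.toMonad.obj Ph.A)).f ≫
          (N.obj (adj.toMonad.obj Ph.A)).a ≫ ((N.map Ph.a).f ≫ Ph.a.f) := by
        erw [h2]; repeat erw [Category.assoc]
    _ = (T : K ⥤ K).map (adj.unit.app (adj.toMonad.obj Ph.A)).f ≫
          ((N.obj (adj.toMonad.obj Ph.A)).a ≫ (adj.counit.app (N.obj Ph.A)).f) ≫ Ph.a.f := by
        erw [h3]; (repeat erw [Category.assoc]); rfl
    _ = (T : K ⥤ K).map ((adj.unit.app (adj.toMonad.obj Ph.A)).f ≫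
          (adj.counit.app (N.obj Ph.A)).f) ≫ (N.obj Ph.A).a ≫ Ph.a.f := by
        erw [h4, Functor.map_comp]; (repeat erw [Category.assoc]); rfl
    _ = _ := by erw [h5, CategoryTheory.Functor.map_id, Category.id_comp]

lemma gs_assoc (Ph : adj.toMonad.Algebra) :
    T.μ.app Ph.A.A ≫ gs α adj Ph = (T : K ⥤ K).map (gs α adj Ph) ≫ gs α adj Ph := by
  have hn : T.μ.app ((N.obj Ph.A).A) ≫ (N.obj Ph.A).a
      = (T : K ⥤ K).map (N.obj Ph.A).a ≫ (N.obj Ph.A).a := (N.obj Ph.A).assoc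
  have hμ : T.μ.app Ph.A.A ≫ (T : K ⥤ K).map (adj.unit.app Ph.A).f
      = (T : K ⥤ K).map ((T : K ⥤ K).map (adj.unit.app Ph.A).f) ≫ T.μ.app ((N.obj Ph.A).A) :=
    (T.μ.naturality _).symm
  calc T.μ.app Ph.A.A ≫ gs α adj Ph
      = (T : K ⥤ K).map ((T : K ⥤ K).map (adj.unit.app Ph.A).f) ≫
          (T.μ.app ((N.obj Ph.A).A) ≫ (N.obj Ph.A).a) ≫ Ph.a.f := by
        erw [gs, ← Category.assoc, hμ]; (repeat erw [Category.assoc]); rfl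
    _ = (T : K ⥤ K).map ((T : K ⥤ K).map (adj.unit.app Ph.A).f) ≫
          (T : K ⥤ K).map (N.obj Ph.A).a ≫ ((N.obj Ph.A).a ≫ Ph.a.f) := by
        erw [hn]; (repeat erw [Category.assoc]); rfl
    _ = (T : K ⥤ K).map ((T : K ⥤ K).map (adj.unit.app Ph.A).f) ≫
          (T : K ⥤ K).map (N.obj Ph.A).a ≫ ((T : K ⥤ K).map Ph.a.f ≫ gs α adj Ph) := by
        erw [gs_key]
    _ = (T : K ⥤ K).map (gs α adj Ph) ≫ gs α adj Ph := by
        erw [gs, Functor.map_comp, Functor.map_comp]; repeat erw [Category.assoc]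

/-- The inverse of the comparison functor. -/
def G : adj.toMonad.Algebra ⥤ T.Algebra where
  obj Ph :=
    { A := Ph.A.A
      a := gs α adj Ph
      unit := gs_unit α adj Ph
      assoc := gs_assoc α adj Ph }
  map {Ph Qh} f :=
    { f := f.f.f
      h := by
        have m1 : f.f.f ≫ (adj.unit.app Qh.A).f = (adj.unit.app Ph.A).f ≫ (N.map f.f).f :=
          congrArg Monad.Algebra.Hom.f (adj.unit.naturality f.f)
        have m2 : (T : K ⥤ K).map (N.map f.f).f ≫ (N.obj Qh.A).a
            = (N.obj Ph.A).a ≫ (N.map f.f).f := (N.map f.f).h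
        have m3 : (N.map f.f).f ≫ Qh.a.f = Ph.a.f ≫ f.f.f :=
          congrArg Monad.Algebra.Hom.f f.h
        calc (T : K ⥤ K).map f.f.f ≫ gs α adj Qh
            = (T : K ⥤ K).map (f.f.f ≫ (adj.unit.app Qh.A).f) ≫ ((N.obj Qh.A).a ≫ Qh.a.f) := by
              erw [Functor.map_comp, gs]; repeat erw [Category.assoc]
          _ = (T : K ⥤ K).map (adj.unit.app Ph.A).f ≫
                ((T : K ⥤ K).map (N.map f.f).f ≫ (N.obj Qh.A).a) ≫ Qh.a.f := by
              erw [m1, Functor.map_comp]; (repeat erw [Category.assoc]); rfl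
          _ = (T : K ⥤ K).map (adj.unit.app Ph.A).f ≫
                (N.obj Ph.A).a ≫ ((N.map f.f).f ≫ Qh.a.f) := by
              erw [m2]; repeat erw [Category.assoc]
          _ = gs α adj Ph ≫ f.f.f := by erw [m3, gs]; (repeat erw [Category.assoc]); rfl }
  map_id _ := Monad.Algebra.Hom.ext rfl
  map_comp _ _ := Monad.Algebra.Hom.ext rfl

lemma comp_G_obj (X : T.Algebra) :
    (G α adj).obj ((Monad.comparison adj).obj X) = X := by
  refine algebra_ext rfl (heq_of_eq ?_)
  show (T : K ⥤ K).map (adj.unit.app ((algebraFunctorOfMonadHom α).obj X)).f ≫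
      ((N.obj ((algebraFunctorOfMonadHom α).obj X)).a ≫ (adj.counit.app X).f) = X.a
  have h1 : (N.obj ((algebraFunctorOfMonadHom α).obj X)).a ≫ (adj.counit.app X).f
      = (T : K ⥤ K).map (adj.counit.app X).f ≫ X.a := ((adj.counit.app X).h).symm
  have h2 : (adj.unit.app ((algebraFunctorOfMonadHom α).obj X)).f ≫ (adj.counit.app X).f = 𝟙 _ :=
    congrArg Monad.Algebra.Hom.f (adj.right_triangle_components X)
  erw [h1, ← Category.assoc, ← Functor.map_comp, h2]; erw [CategoryTheory.Functor.map_id, Category.id_comp]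

lemma G_carrier (Ph : adj.toMonad.Algebra) :
    (algebraFunctorOfMonadHom α).obj ((G α adj).obj Ph) = Ph.A := by
  refine algebra_ext rfl (heq_of_eq ?_)
  show α.app Ph.A.A ≫ gs α adj Ph = Ph.A.a
  have h1 : α.app Ph.A.A ≫ (T : K ⥤ K).map (adj.unit.app Ph.A).f
      = (A : K ⥤ K).map (adj.unit.app Ph.A).f ≫ α.app ((N.obj Ph.A).A) :=
    (α.toNatTrans.naturality _).symm
  have h2 : (A : K ⥤ K).map Ph.a.f ≫ Ph.A.a
      = (α.app ((N.obj Ph.A).A) ≫ (N.obj Ph.A).a) ≫ Ph.a.f := Ph.a.h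
  calc α.app Ph.A.A ≫ gs α adj Ph
      = (A : K ⥤ K).map (adj.unit.app Ph.A).f ≫
          (α.app ((N.obj Ph.A).A) ≫ (N.obj Ph.A).a) ≫ Ph.a.f := by
        erw [gs, ← Category.assoc, h1]; (repeat erw [Category.assoc]); rfl
    _ = (A : K ⥤ K).map ((adj.unit.app Ph.A).f ≫ Ph.a.f) ≫ Ph.A.a := by
        erw [← h2, Functor.map_comp]; (repeat erw [Category.assoc]); rfl
    _ = Ph.A.a := by erw [gs_unit_aux]; simp

/-- `Ph.a.f` as a `T`-algebra morphism `N.obj Ph.A ⟶ (G α adj).obj Ph`. -/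
def aHat (Ph : adj.toMonad.Algebra) : N.obj Ph.A ⟶ (G α adj).obj Ph :=
  { f := Ph.a.f
    h := gs_key α adj Ph }

lemma counit_eq (Ph : adj.toMonad.Algebra) :
    adj.counit.app ((G α adj).obj Ph)
      = eqToHom (congrArg N.obj (G_carrier α adj Ph)) ≫ aHat α adj Ph := by
  have he : (adj.homEquiv Ph.A ((G α adj).obj Ph)) (aHat α adj Ph)
      = eqToHom (G_carrier α adj Ph).symm := by
    refine Monad.Algebra.Hom.ext ?_
    rw [eqToHom_f]
    have : (adj.homEquiv Ph.A ((G α adj).obj Ph)) (aHat α adj Ph)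
        = adj.unit.app Ph.A ≫ (algebraFunctorOfMonadHom α).map (aHat α adj Ph) :=
      adj.homEquiv_unit _ _ _
    rw [this]
    show (adj.unit.app Ph.A).f ≫ Ph.a.f = _
    rw [gs_unit_aux]
    rfl
  have h2 : aHat α adj Ph
      = N.map (eqToHom (G_carrier α adj Ph).symm) ≫ adj.counit.app ((G α adj).obj Ph) := by
    have h3 := congrArg (adj.homEquiv Ph.A ((G α adj).obj Ph)).symm he
    rw [Equiv.symm_apply_apply] at h3
    rw [h3, Adjunction.homEquiv_counit]
  have h4 : eqToHom (congrArg N.obj (G_carrier α adj Ph)) ≫ aHat α adj Ph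
      = adj.counit.app ((G α adj).obj Ph) := by
    rw [h2]
    simp [eqToHom_map]
  exact h4.symm

lemma G_comp_obj (Ph : adj.toMonad.Algebra) :
    (Monad.comparison adj).obj ((G α adj).obj Ph) = Ph := by
  refine algebra_ext (G_carrier α adj Ph) ?_
  show HEq ((algebraFunctorOfMonadHom α).map (adj.counit.app ((G α adj).obj Ph))) Ph.a
  refine alg_hom_hext ?_ (G_carrier α adj Ph) ?_
  · exact congrArg (fun Z => adj.toMonad.obj Z) (G_carrier α adj Ph)
  · show HEq (adj.counit.app ((G α adj).obj Ph)).f Ph.a.f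
    rw [counit_eq α adj Ph]
    show HEq ((eqToHom (congrArg N.obj (G_carrier α adj Ph)) ≫ aHat α adj Ph).f) Ph.a.f
    rw [Monad.Algebra.comp_f, eqToHom_f]
    exact eqToHom_comp_heq _ _

theorem comp_G : Monad.comparison adj ⋙ G α adj = 𝟭 T.Algebra :=
  Functor.hext (comp_G_obj α adj) fun X Y f =>
    alg_hom_hext (comp_G_obj α adj X) (comp_G_obj α adj Y) HEq.rfl

theorem G_comp : G α adj ⋙ Monad.comparison adj = 𝟭 adj.toMonad.Algebra :=
  Functor.hext (G_comp_obj α adj) fun Ph Qh f =>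
    alg_hom_hext (G_comp_obj α adj Ph) (G_comp_obj α adj Qh)
      (alg_hom_hext (G_carrier α adj Ph) (G_carrier α adj Qh) HEq.rfl)

end

end Stmt10Aux

/-- For a morphism of monads `α : A ⟶ T` on a category with coequalizers, with `A` and `T`
preserving coequalizers, the Eilenberg–Moore comparison functor
`K_T → (K_A)_{R_A N_A}` associated to the canonical adjunction `N_A ⊣ R_A` is an
isomorphism of categories. -/
theorem stmt10 {K : Type*} [Category K] [HasCoequalizers K]
    (A T : Monad K) (α : A ⟶ T)
    (hA : PreservesColimitsOfShape WalkingParallelPair (A : K ⥤ K))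
    (hT : PreservesColimitsOfShape WalkingParallelPair (T : K ⥤ K))
    (R_A : T.Algebra ⥤ A.Algebra)
    (hforget : R_A ⋙ A.forget = T.forget)
    (hrestr : ∀ X : T.Algebra, HEq (R_A.obj X).a (α.app X.A ≫ X.a))
    (N_A : A.Algebra ⥤ T.Algebra) (adj : N_A ⊣ R_A) :
    ∃ G : adj.toMonad.Algebra ⥤ T.Algebra,
      Monad.comparison adj ⋙ G = 𝟭 T.Algebra ∧
      G ⋙ Monad.comparison adj = 𝟭 adj.toMonad.Algebra := by
  have hobj : ∀ X : T.Algebra, R_A.obj X = (Monad.algebraFunctorOfMonadHom α).obj X := by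
    intro X
    exact Stmt10Aux.algebra_ext (Functor.congr_obj hforget X) (hrestr X)
  have hR : R_A = Monad.algebraFunctorOfMonadHom α := by
    refine Functor.hext hobj fun X Y f => ?_
    refine Stmt10Aux.alg_hom_hext (hobj X) (hobj Y) ?_
    exact Functor.hcongr_hom hforget f
  subst hR
  exact ⟨Stmt10Aux.G α adj, Stmt10Aux.comp_G α adj, Stmt10Aux.G_comp α adj⟩
end

section
/- Let C be a comonad on a category A and (L : B → A, R) an adjoint pair with counit ε, where L is a left C-comodule functor with coaction l : L → CL. Then the canonical natural transformation can := (Cε) ∘ (lR) : LR → C is a morphism of comonads from the comonad LR (induced by the adjunction) to C. -/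
open CategoryTheory

/-- For a comonad `C` on `A` and a left `C`-comodule functor `(L, l)` with right adjoint `R`,
the canonical natural transformation `can = (Cε) ∘ (lR) : LR → C` is a morphism of comonads
from the comonad `LR` induced by the adjunction to `C`. -/
theorem stmt12 {A B : Type*} [Category A] [Category B]
    (C : Comonad A) (L : B ⥤ A) (R : A ⥤ B) (adj : L ⊣ R)
    (l : L ⟶ L ⋙ (C : A ⥤ A))
    -- coassociativity of the coaction
    (hcoassoc : ∀ Y : B, l.app Y ≫ C.δ.app (L.obj Y) =
      l.app Y ≫ (C : A ⥤ A).map (l.app Y))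
    -- counitality of the coaction
    (hcounit : ∀ Y : B, l.app Y ≫ C.ε.app (L.obj Y) = 𝟙 (L.obj Y)) :
    -- `can` is compatible with the counits
    (∀ X : A, (l.app (R.obj X) ≫ (C : A ⥤ A).map (adj.counit.app X)) ≫ C.ε.app X =
      adj.counit.app X) ∧
    -- `can` is compatible with the coproducts
    (∀ X : A, (l.app (R.obj X) ≫ (C : A ⥤ A).map (adj.counit.app X)) ≫ C.δ.app X =
      L.map (adj.unit.app (R.obj X)) ≫
        L.map (R.map (l.app (R.obj X) ≫ (C : A ⥤ A).map (adj.counit.app X))) ≫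
        (l.app (R.obj ((C : A ⥤ A).obj X)) ≫
          (C : A ⥤ A).map (adj.counit.app ((C : A ⥤ A).obj X)))) := by
  constructor
  · intro X
    have h := C.ε.naturality (adj.counit.app X)
    simp only [Functor.id_map, Functor.id_obj, Functor.comp_obj] at h
    rw [Category.assoc, h, ← Category.assoc, hcounit, Category.id_comp]
  · intro X
    have hl1 : L.map (adj.unit.app (R.obj X)) ≫ l.app (R.obj (L.obj (R.obj X))) =
        l.app (R.obj X) ≫ (C : A ⥤ A).map (L.map (adj.unit.app (R.obj X))) :=
      l.naturality _
    have hl2 : L.map (R.map (l.app (R.obj X) ≫ (C : A ⥤ A).map (adj.counit.app X))) ≫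
        l.app (R.obj ((C : A ⥤ A).obj X)) =
        l.app (R.obj (L.obj (R.obj X))) ≫
          (C : A ⥤ A).map (L.map (R.map (l.app (R.obj X) ≫ (C : A ⥤ A).map (adj.counit.app X)))) :=
      l.naturality _
    have hε : L.map (R.map (l.app (R.obj X) ≫ (C : A ⥤ A).map (adj.counit.app X))) ≫
        adj.counit.app ((C : A ⥤ A).obj X) =
        adj.counit.app (L.obj (R.obj X)) ≫ (l.app (R.obj X) ≫ (C : A ⥤ A).map (adj.counit.app X)) :=
      adj.counit.naturality _
    have htri : L.map (adj.unit.app (R.obj X)) ≫ adj.counit.app (L.obj (R.obj X)) =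
        𝟙 (L.obj (R.obj X)) := adj.left_triangle_components _
    have hδ : (C : A ⥤ A).map (adj.counit.app X) ≫ C.δ.app X =
        C.δ.app (L.obj (R.obj X)) ≫ ((C : A ⥤ A) ⋙ (C : A ⥤ A)).map (adj.counit.app X) :=
      C.δ.naturality _
    calc (l.app (R.obj X) ≫ (C : A ⥤ A).map (adj.counit.app X)) ≫ C.δ.app X
        = l.app (R.obj X) ≫ C.δ.app (L.obj (R.obj X)) ≫
            (C : A ⥤ A).map ((C : A ⥤ A).map (adj.counit.app X)) := by
          rw [Category.assoc, hδ]; rfl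
      _ = l.app (R.obj X) ≫ (C : A ⥤ A).map (l.app (R.obj X)) ≫
            (C : A ⥤ A).map ((C : A ⥤ A).map (adj.counit.app X)) := by
          rw [← Category.assoc, hcoassoc, Category.assoc]
      _ = l.app (R.obj X) ≫ (C : A ⥤ A).map (l.app (R.obj X) ≫
            (C : A ⥤ A).map (adj.counit.app X)) := by rw [Functor.map_comp]
      _ = l.app (R.obj X) ≫ (C : A ⥤ A).map
            (L.map (adj.unit.app (R.obj X)) ≫ adj.counit.app (L.obj (R.obj X)) ≫
              (l.app (R.obj X) ≫ (C : A ⥤ A).map (adj.counit.app X))) := by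
          rw [← Category.assoc, htri, Category.id_comp]
      _ = l.app (R.obj X) ≫ (C : A ⥤ A).map
            (L.map (adj.unit.app (R.obj X)) ≫
              L.map (R.map (l.app (R.obj X) ≫ (C : A ⥤ A).map (adj.counit.app X))) ≫
              adj.counit.app ((C : A ⥤ A).obj X)) := by rw [hε]
      _ = L.map (adj.unit.app (R.obj X)) ≫
            L.map (R.map (l.app (R.obj X) ≫ (C : A ⥤ A).map (adj.counit.app X))) ≫
            (l.app (R.obj ((C : A ⥤ A).obj X)) ≫
              (C : A ⥤ A).map (adj.counit.app ((C : A ⥤ A).obj X))) := by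
          conv_rhs => rw [reassoc_of% hl2, reassoc_of% hl1]
          simp only [Functor.map_comp, Category.assoc]
end

section
/- Let (L ⊣ R) be an adjunction with L : K → C, unit η and counit ε, and let G be a comonad on C such that R is a right G-comodule functor with coaction g : R → RG. Assume the equalizer (B, β) of gL and Rḡ exists in the functor category, where ḡ := (εGL) ∘ (LgL) ∘ (Lη) : L → GL is the induced left G-coaction on L. Then B carries a unique monad structure (B, m^B, u^B) on K such that β : B → RL is a morphism of monads into the monad RL induced by the adjunction. -/
open CategoryTheory CategoryTheory.Limits

/-- Given an adjunction `L ⊣ R` and a comonad `G` on `C` with a right `G`-coaction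
`g : R → RG`, if the equalizer `(B, β)` of `gL` and `Rḡ` exists (where `ḡ` is the induced
left `G`-coaction on `L`), then `B` carries a unique monad structure such that `β` is a
morphism of monads into the monad `RL` of the adjunction. -/
theorem stmt13 {K C : Type*} [Category K] [Category C]
    (L : K ⥤ C) (R : C ⥤ K) (adj : L ⊣ R) (G : Comonad C)
    (g : R ⟶ (G : C ⥤ C) ⋙ R)
    -- coassociativity and counitality of the right coaction `g`
    (hg1 : ∀ X : C, g.app X ≫ R.map (G.δ.app X) = g.app X ≫ g.app ((G : C ⥤ C).obj X))
    (hg2 : ∀ X : C, g.app X ≫ R.map (G.ε.app X) = 𝟙 (R.obj X))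
    -- the induced left `G`-coaction `ḡ` on `L`
    (gbar : L ⟶ L ⋙ (G : C ⥤ C))
    (hgbar : ∀ Y : K, gbar.app Y =
      L.map (adj.unit.app Y) ≫ L.map (g.app (L.obj Y)) ≫
        adj.counit.app ((G : C ⥤ C).obj (L.obj Y)))
    -- the equalizer `(B, β)` of `gL` and `Rḡ`
    (B : K ⥤ K) (β : B ⟶ L ⋙ R)
    (w : β ≫ Functor.whiskerLeft L g =
      β ≫ (Functor.whiskerRight gbar R : L ⋙ R ⟶ L ⋙ (G : C ⥤ C) ⋙ R))
    (hB : IsLimit (Fork.ofι β w)) :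
    -- there is a unique monad structure on `B` making `β` a monad morphism into `RL`
    ∃! mu : (B ⋙ B ⟶ B) × (𝟭 K ⟶ B),
      -- associativity
      (∀ Y : K, B.map (mu.1.app Y) ≫ mu.1.app Y = mu.1.app (B.obj Y) ≫ mu.1.app Y) ∧
      -- unitality
      (∀ Y : K, mu.2.app (B.obj Y) ≫ mu.1.app Y = 𝟙 (B.obj Y)) ∧
      (∀ Y : K, B.map (mu.2.app Y) ≫ mu.1.app Y = 𝟙 (B.obj Y)) ∧
      -- `β` is compatible with the units
      (∀ Y : K, mu.2.app Y ≫ β.app Y = adj.unit.app Y) ∧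
      -- `β` is compatible with the multiplications
      (∀ Y : K, mu.1.app Y ≫ β.app Y =
        B.map (β.app Y) ≫ β.app (R.obj (L.obj Y)) ≫
          R.map (adj.counit.app (L.obj Y))) := by
  -- componentwise equalizer condition
  have hw : ∀ Y : K, β.app Y ≫ g.app (L.obj Y) = β.app Y ≫ R.map (gbar.app Y) := by
    intro Y; simpa using NatTrans.congr_app w Y
  -- the unit equalizes the pair
  have wu : adj.unit ≫ Functor.whiskerLeft L g =
      adj.unit ≫ (Functor.whiskerRight gbar R : L ⋙ R ⟶ L ⋙ (G : C ⥤ C) ⋙ R) := by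
    ext Y
    simp only [NatTrans.comp_app, Functor.whiskerLeft_app, Functor.whiskerRight_app, Functor.id_obj,
      Functor.comp_obj]
    rw [hgbar, R.map_comp, R.map_comp]
    have h1 := adj.unit.naturality (adj.unit.app Y)
    simp only [Functor.id_obj, Functor.comp_obj, Functor.id_map, Functor.comp_map] at h1
    rw [← Category.assoc, ← h1, Category.assoc]
    have h2 := adj.unit.naturality (g.app (L.obj Y))
    simp only [Functor.id_obj, Functor.comp_obj, Functor.id_map, Functor.comp_map] at h2
    rw [← Category.assoc (adj.unit.app (R.obj (L.obj Y))), ← h2]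
    simp [adj.right_triangle_components]
  -- the candidate multiplication target
  let t : B ⋙ B ⟶ L ⋙ R :=
    { app := fun Y => B.map (β.app Y) ≫ β.app (R.obj (L.obj Y)) ≫
        R.map (adj.counit.app (L.obj Y))
      naturality := by
        intro Y Z f
        have h1 := β.naturality f
        have h2 := β.naturality (R.map (L.map f))
        have h3 := adj.counit.naturality (L.map f)
        simp only [Functor.comp_obj, Functor.comp_map, Functor.id_obj, Functor.id_map]
          at h1 h2 h3 ⊢
        rw [← Functor.map_comp_assoc, h1, Functor.map_comp_assoc, reassoc_of% h2,
          ← R.map_comp, h3, R.map_comp]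
        simp }
  have ht : ∀ Y : K, t.app Y = B.map (β.app Y) ≫ β.app (R.obj (L.obj Y)) ≫
      R.map (adj.counit.app (L.obj Y)) := fun Y => rfl
  -- t equalizes the pair
  have wt : t ≫ Functor.whiskerLeft L g =
      t ≫ (Functor.whiskerRight gbar R : L ⋙ R ⟶ L ⋙ (G : C ⥤ C) ⋙ R) := by
    ext Y
    simp only [NatTrans.comp_app, Functor.whiskerLeft_app, Functor.whiskerRight_app, Functor.comp_obj, ht,
      Category.assoc]
    have hg := g.naturality (adj.counit.app (L.obj Y))
    simp only [Functor.comp_obj, Functor.comp_map, Functor.id_obj, Functor.id_map] at hg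
    rw [hg, reassoc_of% (hw (R.obj (L.obj Y))), hgbar (R.obj (L.obj Y)), R.map_comp,
      R.map_comp]
    -- combine the two counit maps
    have h3 := adj.counit.naturality ((G : C ⥤ C).map (adj.counit.app (L.obj Y)))
    simp only [Functor.comp_obj, Functor.comp_map, Functor.id_obj, Functor.id_map] at h3
    rw [Category.assoc, Category.assoc, ← R.map_comp (adj.counit.app _), ← h3, R.map_comp]
    -- g naturality in the middle
    rw [← Category.assoc (R.map (L.map (g.app _))), ← R.map_comp, ← L.map_comp, ← hg]
    simp only [Functor.map_comp, Category.assoc]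
    -- triangle identity
    rw [← Functor.map_comp_assoc, ← L.map_comp, adj.right_triangle_components]
    simp only [Functor.id_obj, CategoryTheory.Functor.map_id, Category.id_comp]
    -- β naturality and the equalizer condition
    have h4 := β.naturality (g.app (L.obj Y))
    simp only [Functor.comp_obj, Functor.comp_map] at h4
    rw [← reassoc_of% h4, ← Functor.map_comp_assoc, hw Y, Functor.map_comp_assoc]
    have h5 := β.naturality (R.map (gbar.app Y))
    simp only [Functor.comp_obj, Functor.comp_map] at h5
    rw [reassoc_of% h5]
    have h6 := adj.counit.naturality (gbar.app Y)
    simp only [Functor.comp_obj, Functor.comp_map, Functor.id_obj, Functor.id_map] at h6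
    rw [← R.map_comp, h6, R.map_comp]
  -- construct the unit and multiplication via the universal property
  obtain ⟨u1, huι⟩ := Fork.IsLimit.lift' hB adj.unit wu
  obtain ⟨m1, hmι⟩ := Fork.IsLimit.lift' hB t wt
  let u : 𝟭 K ⟶ B := u1
  let m : B ⋙ B ⟶ B := m1
  have huβ : u ≫ β = adj.unit := huι
  have hmβ : m ≫ β = t := hmι
  have hu : ∀ Y : K, u.app Y ≫ β.app Y = adj.unit.app Y := by
    intro Y; simpa using NatTrans.congr_app huβ Y
  have hm : ∀ Y : K, m.app Y ≫ β.app Y = B.map (β.app Y) ≫ β.app (R.obj (L.obj Y)) ≫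
      R.map (adj.counit.app (L.obj Y)) := by
    intro Y; exact NatTrans.congr_app hmβ Y
  -- associativity, proved after composing with the (monic) β
  have hassoc : ∀ Y : K, B.map (m.app Y) ≫ m.app Y = m.app (B.obj Y) ≫ m.app Y := by
    have key : (Functor.whiskerRight m B ≫ m : B ⋙ B ⋙ B ⟶ B) =
        (Functor.whiskerLeft B m ≫ m : B ⋙ B ⋙ B ⟶ B) := by
      apply Fork.IsLimit.hom_ext hB
      ext Y
      simp only [NatTrans.comp_app, Functor.whiskerRight_app, Functor.whiskerLeft_app, Fork.ι_ofι,
        Functor.comp_obj, Category.assoc]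
      rw [hm Y]
      -- LHS
      rw [← Functor.map_comp_assoc, hm Y, Functor.map_comp, Functor.map_comp,
        Category.assoc, Category.assoc]
      have h2 := β.naturality (R.map (adj.counit.app (L.obj Y)))
      simp only [Functor.comp_obj, Functor.comp_map] at h2
      rw [reassoc_of% h2]
      have h3 := adj.counit.naturality (adj.counit.app (L.obj Y))
      simp only [Functor.comp_obj, Functor.comp_map, Functor.id_obj, Functor.id_map] at h3
      rw [← R.map_comp, h3, R.map_comp]
      -- RHS
      have h4 := m.naturality (β.app Y)
      simp only [Functor.comp_obj, Functor.comp_map] at h4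
      rw [← reassoc_of% h4, reassoc_of% (hm (R.obj (L.obj Y)))]
    intro Y
    have := NatTrans.congr_app key Y
    simpa using this
  have hunit1 : ∀ Y : K, u.app (B.obj Y) ≫ m.app Y = 𝟙 (B.obj Y) := by
    have key : (Functor.whiskerLeft B u ≫ m : B ⟶ B) = 𝟙 B := by
      apply Fork.IsLimit.hom_ext hB
      ext Y
      simp only [NatTrans.comp_app, Functor.whiskerLeft_app, NatTrans.id_app, Fork.ι_ofι,
        Functor.comp_obj, Category.assoc, Category.id_comp]
      rw [hm Y]
      have h1 := u.naturality (β.app Y)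
      simp only [Functor.id_obj, Functor.id_map] at h1
      rw [← reassoc_of% h1, reassoc_of% (hu (R.obj (L.obj Y)))]
      rw [adj.right_triangle_components, Category.comp_id]
    intro Y
    have := NatTrans.congr_app key Y
    simpa using this
  have hunit2 : ∀ Y : K, B.map (u.app Y) ≫ m.app Y = 𝟙 (B.obj Y) := by
    have key : (Functor.whiskerRight u B ≫ m : B ⟶ B) = 𝟙 B := by
      apply Fork.IsLimit.hom_ext hB
      ext Y
      simp only [NatTrans.comp_app, Functor.whiskerRight_app, NatTrans.id_app, Fork.ι_ofι,
        Functor.id_obj, Functor.comp_obj, Category.assoc, Category.id_comp]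
      rw [hm Y, ← Functor.map_comp_assoc, hu Y]
      have h1 := β.naturality (adj.unit.app Y)
      simp only [Functor.comp_obj, Functor.comp_map, Functor.id_obj, Functor.id_map] at h1
      rw [reassoc_of% h1, ← R.map_comp, adj.left_triangle_components, R.map_id,
        Category.comp_id]
    intro Y
    have := NatTrans.congr_app key Y
    simpa using this
  refine ⟨⟨m, u⟩, ⟨hassoc, hunit1, hunit2, hu, hm⟩, ?_⟩
  rintro ⟨m', u'⟩ ⟨-, -, -, h4, h5⟩
  have hm' : m' = m := by
    apply Fork.IsLimit.hom_ext hB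
    ext Y
    simpa using (h5 Y).trans (hm Y).symm
  have hu' : u' = u := by
    apply Fork.IsLimit.hom_ext hB
    ext Y
    simpa using (h4 Y).trans (hu Y).symm
  simp [hm', hu']
end

section
/- Given an object (T, (N_A ⊣ R_A), (N_B ⊣ R_B), C, ξ) of RArr(A, B), i.e., two adjunctions N_A : A → T, R_A : T → A (unit η^A, counit ε^A) and N_B : B → T, R_B : T → B (unit η^B, counit ε^B), a comonad C on A, and a comonad arrow (R_A, ξ) from C to the comonad N_B R_B with ξ : C R_A → R_A N_B R_B invertible, the natural transformation τ := (ξ N_A R_A N_B) ∘ (C η^A R_A N_B) ∘ (ξ⁻¹ N_B) ∘ (R_A N_B η^B) : R_A N_B → R_A N_B R_B N_A R_A N_B makes (T, (N_A, R_A), (N_B, R_B), τ) a pre-torsor. -/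
open CategoryTheory

/-- A regular comonad arrow `(R_A, ξ)` from a comonad `C` on `A` to the comonad `N_B R_B`
determines a pre-torsor `τ = (ξ N_A R_A N_B) ∘ (C η^A R_A N_B) ∘ (ξ⁻¹ N_B) ∘ (R_A N_B η^B)`
over the two adjunctions. -/
theorem stmt14 {A B T : Type*} [Category A] [Category B] [Category T]
    (N_A : A ⥤ T) (R_A : T ⥤ A) (adjA : N_A ⊣ R_A)
    (N_B : B ⥤ T) (R_B : T ⥤ B) (adjB : N_B ⊣ R_B)
    (C : Comonad A)
    -- the regular comonad arrow, given by the invertible `ξ : C R_A ≅ R_A N_B R_B`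
    (ξ : (R_A ⋙ (C : A ⥤ A)) ≅ (R_B ⋙ N_B ⋙ R_A))
    -- compatibility of `ξ` with the counits
    (hξ1 : ∀ X : T, ξ.hom.app X ≫ R_A.map (adjB.counit.app X) = C.ε.app (R_A.obj X))
    -- compatibility of `ξ` with the coproducts
    (hξ2 : ∀ X : T, ξ.hom.app X ≫ R_A.map (N_B.map (adjB.unit.app (R_B.obj X))) =
      C.δ.app (R_A.obj X) ≫ (C : A ⥤ A).map (ξ.hom.app X) ≫
        ξ.hom.app (N_B.obj (R_B.obj X)))
    -- the pre-torsor map `τ`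
    (τ : ∀ X : B, R_A.obj (N_B.obj X) ⟶
      R_A.obj (N_B.obj (R_B.obj (N_A.obj (R_A.obj (N_B.obj X))))))
    (hτ : ∀ X : B, τ X =
      R_A.map (N_B.map (adjB.unit.app X)) ≫
        ξ.inv.app (N_B.obj X) ≫
        (C : A ⥤ A).map (adjA.unit.app (R_A.obj (N_B.obj X))) ≫
        ξ.hom.app (N_A.obj (R_A.obj (N_B.obj X)))) :
    -- first pre-torsor axiom
    (∀ X : B, τ X ≫ R_A.map (N_B.map (R_B.map (adjA.counit.app (N_B.obj X)))) =
      R_A.map (N_B.map (adjB.unit.app X))) ∧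
    -- second pre-torsor axiom
    (∀ X : B, τ X ≫ R_A.map (adjB.counit.app (N_A.obj (R_A.obj (N_B.obj X)))) =
      adjA.unit.app (R_A.obj (N_B.obj X))) ∧
    -- coassociativity of `τ`
    (∀ X : B, τ X ≫ R_A.map (N_B.map (R_B.map (N_A.map (τ X)))) =
      τ X ≫ τ (R_B.obj (N_A.obj (R_A.obj (N_B.obj X))))) := by

  refine ⟨?_, ?_, ?_⟩
  · -- first axiom
    intro X
    have h1 := ξ.hom.naturality (adjA.counit.app (N_B.obj X))
    have tri : adjA.unit.app (R_A.obj (N_B.obj X)) ≫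
        R_A.map (adjA.counit.app (N_B.obj X)) = 𝟙 _ :=
      adjA.right_triangle_components _
    simp only [Functor.comp_map, Functor.comp_obj] at h1
    rw [hτ]
    simp only [Category.assoc]
    rw [← h1, ← Functor.map_comp_assoc, tri]
    simp
  · -- second axiom
    intro X
    have h1 := reassoc_of% hξ1 (N_A.obj (R_A.obj (N_B.obj X)))
    have h2 := reassoc_of% C.ε.naturality (adjA.unit.app (R_A.obj (N_B.obj X)))
    have h3 : ξ.inv.app (N_B.obj X) ≫ C.ε.app (R_A.obj (N_B.obj X)) =
        R_A.map (adjB.counit.app (N_B.obj X)) := by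
      rw [← hξ1, Iso.inv_hom_id_app_assoc]
    have tri : N_B.map (adjB.unit.app X) ≫ adjB.counit.app (N_B.obj X) = 𝟙 _ :=
      adjB.left_triangle_components _
    rw [hτ]
    simp only [Category.assoc]
    rw [hξ1]
    have h2' := C.ε.naturality (adjA.unit.app (R_A.obj (N_B.obj X)))
    simp only [Functor.comp_map, Functor.id_map, Functor.comp_obj, Functor.id_obj] at h2'
    rw [h2', reassoc_of% h3, ← Functor.map_comp_assoc, tri]
    simp
  · -- coassociativity
    intro X
    -- naturality of ξ.hom at N_A.map (τ X)
    have n1 := ξ.hom.naturality (N_A.map (τ X))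
    simp only [Functor.comp_map] at n1
    -- naturality of the unit of adjA at τ X
    have n2 := adjA.unit.naturality (τ X)
    simp only [Functor.comp_map, Functor.id_map] at n2
    -- hξ2 at N_A (R_A.obj (N_B.obj X))
    have k2 := hξ2 (N_A.obj (R_A.obj (N_B.obj X)))
    -- hξ2 at N_B X
    have k3 := hξ2 (N_B.obj X)
    -- naturality of ξ.inv at N_B.map (adjB.unit.app X)
    have n3 := ξ.inv.naturality (N_B.map (adjB.unit.app X))
    simp only [Functor.comp_map] at n3
    -- naturality of δ at adjA.unit.app (R_A.obj (N_B.obj X))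
    have n4 := C.δ.naturality (adjA.unit.app (R_A.obj (N_B.obj X)))
    simp only [Functor.comp_map] at n4
    -- naturality of adjB.unit at adjB.unit.app X
    have n5 := adjB.unit.naturality (adjB.unit.app X)
    simp only [Functor.comp_map, Functor.id_map, Functor.comp_obj, Functor.id_obj] at n5
    -- delta in terms of xi
    have hδ : C.δ.app (R_A.obj (N_B.obj X)) = ξ.hom.app (N_B.obj X) ≫
        R_A.map (N_B.map (adjB.unit.app (R_B.obj (N_B.obj X)))) ≫
        ξ.inv.app (N_B.obj (R_B.obj (N_B.obj X))) ≫
        (C : A ⥤ A).map (ξ.inv.app (N_B.obj X)) := by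
      rw [reassoc_of% k3]
      simp [← Functor.map_comp]
    -- key lemma: a ≫ b ≫ C(a) ≫ C(b) = a ≫ b ≫ δ_(R_A.obj (N_B.obj X))
    have key : R_A.map (N_B.map (adjB.unit.app X)) ≫ ξ.inv.app (N_B.obj X) ≫
        (C : A ⥤ A).map (R_A.map (N_B.map (adjB.unit.app X))) ≫
        (C : A ⥤ A).map (ξ.inv.app (N_B.obj X)) =
        R_A.map (N_B.map (adjB.unit.app X)) ≫ ξ.inv.app (N_B.obj X) ≫
        C.δ.app (R_A.obj (N_B.obj X)) := by
      have hba : ξ.inv.app (N_B.obj X) ≫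
          (C : A ⥤ A).map (R_A.map (N_B.map (adjB.unit.app X))) =
          R_A.map (N_B.map (R_B.map (N_B.map (adjB.unit.app X)))) ≫
          ξ.inv.app (N_B.obj (R_B.obj (N_B.obj X))) := (n3).symm
      have n5' : N_B.map (adjB.unit.app X) ≫
          N_B.map (R_B.map (N_B.map (adjB.unit.app X))) =
          N_B.map (adjB.unit.app X) ≫
          N_B.map (adjB.unit.app (R_B.obj (N_B.obj X))) := by
        rw [← Functor.map_comp, ← Functor.map_comp, ← n5]
      rw [hδ, reassoc_of% hba, Iso.inv_hom_id_app_assoc,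
        ← Functor.map_comp_assoc, ← Functor.map_comp_assoc, n5']
    -- now assemble
    nth_rewrite 1 [hτ X]
    nth_rewrite 2 [hτ X]
    simp only [Category.assoc]
    rw [← n1]
    -- LHS now: a ≫ ξ.inv ≫ C η^A ≫ C(R_A N_A τX) ≫ ξ.hom
    have cstep : (C : A ⥤ A).map (adjA.unit.app (R_A.obj (N_B.obj X))) ≫
        (C : A ⥤ A).map (R_A.map (N_A.map (τ X))) =
        (C : A ⥤ A).map (τ X) ≫
        (C : A ⥤ A).map (adjA.unit.app (R_A.obj (N_B.obj (R_B.obj (N_A.obj (R_A.obj (N_B.obj X))))))) := by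
      rw [← Functor.map_comp, ← Functor.map_comp, n2]
    rw [reassoc_of% cstep]
    -- RHS side
    rw [hτ (R_B.obj (N_A.obj (R_A.obj (N_B.obj X))))]
    have dstep : ξ.hom.app (N_A.obj (R_A.obj (N_B.obj X))) ≫
        R_A.map (N_B.map (adjB.unit.app (R_B.obj (N_A.obj (R_A.obj (N_B.obj X)))))) ≫
        ξ.inv.app (N_B.obj (R_B.obj (N_A.obj (R_A.obj (N_B.obj X))))) =
        C.δ.app (R_A.obj (N_A.obj (R_A.obj (N_B.obj X)))) ≫ (C : A ⥤ A).map (ξ.hom.app (N_A.obj (R_A.obj (N_B.obj X)))) := by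
      rw [reassoc_of% k2]; simp
    rw [reassoc_of% dstep]
    have n4' : (C : A ⥤ A).map (adjA.unit.app (R_A.obj (N_B.obj X))) ≫ C.δ.app (R_A.obj (N_A.obj (R_A.obj (N_B.obj X)))) =
        C.δ.app (R_A.obj (N_B.obj X)) ≫ (C : A ⥤ A).map ((C : A ⥤ A).map (adjA.unit.app (R_A.obj (N_B.obj X)))) := n4
    rw [reassoc_of% n4']
    -- both sides: a ≫ b ≫ [C(τX) | δ_(R_A.obj (N_B.obj X)) ≫ CC η^A ≫ C(d)] ≫ C η^A' ≫ ξ.hom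
    rw [hτ X]
    simp only [Functor.map_comp, Category.assoc]
    rw [reassoc_of% key]
end

section
/- Let A and B be categories with equalizers, and let P : A → B, Q : B → A, R : A → A, S : B → B be equalizer-preserving functors equipped with natural transformations r : Id_A → R, s : Id_B → S, w : QP → R, z : PQ → S, τ : Q → QPQ satisfying: (i) r is the equalizer of rR and Rr, and s is the equalizer of sS and Ss; (ii) (QPτ) ∘ τ = (τPQ) ∘ τ; (iii) (Qz) ∘ τ = Qs and (wQ) ∘ τ = rQ. Then the equalizer C of ω^l := (QPw) ∘ (τP) and ω^r := QPr (as natural transformations QP → QPR) carries a comonad structure on A whose underlying functor preserves equalizers, and Q is a left C-comodule functor via the unique c : Q → CQ with (iQ) ∘ c = τ, where i : C → QP is the equalizer inclusion. -/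
open CategoryTheory CategoryTheory.Limits

/-- From pre-torsor-like data `(P, Q, R, S, r, s, w, z, τ)` between categories with equalizers
(all functors preserving equalizers), the equalizer `C` of `ω^l = (QPw)∘(τP)` and `ω^r = QPr`
carries a comonad structure whose underlying functor preserves equalizers, and `Q` is a left
`C`-comodule functor via the unique `c` with `(iQ)∘c = τ`. -/
theorem stmt15 {A B : Type*} [Category A] [Category B]
    [HasEqualizers A] [HasEqualizers B]
    (P : A ⥤ B) (Q : B ⥤ A) (Rf : A ⥤ A) (S : B ⥤ B)
    [PreservesLimitsOfShape WalkingParallelPair P]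
    [PreservesLimitsOfShape WalkingParallelPair Q]
    [PreservesLimitsOfShape WalkingParallelPair Rf]
    [PreservesLimitsOfShape WalkingParallelPair S]
    (r : 𝟭 A ⟶ Rf) (s : 𝟭 B ⟶ S)
    (w : P ⋙ Q ⟶ Rf) (z : Q ⋙ P ⟶ S) (τ : Q ⟶ Q ⋙ P ⋙ Q)
    -- (i) `r` and `s` are the equalizers of `(rR, Rr)` and `(sS, Ss)` respectively
    (wr : r ≫ (Functor.whiskerLeft Rf r : Rf ⟶ Rf ⋙ Rf) =
      r ≫ (Functor.whiskerRight r Rf : Rf ⟶ Rf ⋙ Rf))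
    (hr : IsLimit (Fork.ofι r wr))
    (ws : s ≫ (Functor.whiskerLeft S s : S ⟶ S ⋙ S) =
      s ≫ (Functor.whiskerRight s S : S ⟶ S ⋙ S))
    (hs : IsLimit (Fork.ofι s ws))
    -- (ii) coassociativity of `τ`
    (hτ : ∀ Y : B, τ.app Y ≫ Q.map (P.map (τ.app Y)) =
      τ.app Y ≫ τ.app (P.obj (Q.obj Y)))
    -- (iii) compatibility of `τ` with `z` and `w`
    (hz : ∀ Y : B, τ.app Y ≫ Q.map (z.app Y) = Q.map (s.app Y))
    (hw : ∀ Y : B, τ.app Y ≫ w.app (Q.obj Y) = r.app (Q.obj Y))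
    -- the natural transformations `ω^l = (QPw)∘(τP)` and `ω^r = QPr`
    (ωl ωr : P ⋙ Q ⟶ Rf ⋙ P ⋙ Q)
    (hωl : ∀ X : A, ωl.app X = τ.app (P.obj X) ≫ Q.map (P.map (w.app X)))
    (hωr : ∀ X : A, ωr.app X = Q.map (P.map (r.app X)))
    -- the equalizer `(C, i)` of `ω^l` and `ω^r`
    (Cf : A ⥤ A) (i : Cf ⟶ P ⋙ Q) (wi : i ≫ ωl = i ≫ ωr)
    (hi : IsLimit (Fork.ofι i wi)) :
    -- `C` preserves equalizers
    Nonempty (PreservesLimitsOfShape WalkingParallelPair Cf) ∧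
    -- `C` carries a comonad structure and `Q` a left `C`-coaction
    ∃ (δ : Cf ⟶ Cf ⋙ Cf) (ε : Cf ⟶ 𝟭 A) (c : Q ⟶ Q ⋙ Cf),
      -- defining equation of the coproduct: `(ii) ∘ Δ = (τP) ∘ i`
      (∀ X : A, δ.app X ≫ Cf.map (i.app X) ≫ i.app (Q.obj (P.obj X)) =
        i.app X ≫ τ.app (P.obj X)) ∧
      -- defining equation of the counit: `r ∘ ε = w ∘ i`
      (∀ X : A, ε.app X ≫ r.app X = i.app X ≫ w.app X) ∧
      -- comonad laws
      (∀ X : A, δ.app X ≫ Cf.map (δ.app X) = δ.app X ≫ δ.app (Cf.obj X)) ∧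
      (∀ X : A, δ.app X ≫ ε.app (Cf.obj X) = 𝟙 (Cf.obj X)) ∧
      (∀ X : A, δ.app X ≫ Cf.map (ε.app X) = 𝟙 (Cf.obj X)) ∧
      -- defining equation of the coaction: `(iQ) ∘ c = τ`
      (∀ Y : B, c.app Y ≫ i.app (Q.obj Y) = τ.app Y) ∧
      -- `c` is the unique such natural transformation
      (∀ c' : Q ⟶ Q ⋙ Cf, (∀ Y : B, c'.app Y ≫ i.app (Q.obj Y) = τ.app Y) → c' = c) ∧
      -- coassociativity and counitality of the coaction
      (∀ Y : B, c.app Y ≫ δ.app (Q.obj Y) = c.app Y ≫ Cf.map (c.app Y)) ∧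
      (∀ Y : B, c.app Y ≫ ε.app (Q.obj Y) = 𝟙 (Q.obj Y)) := by
  -- unfolded naturality statements
  have inat : ∀ {a b : A} (f : a ⟶ b),
      Cf.map f ≫ i.app b = i.app a ≫ Q.map (P.map f) := fun f => i.naturality f
  have τnat : ∀ {Y Y' : B} (g : Y ⟶ Y'),
      Q.map g ≫ τ.app Y' = τ.app Y ≫ Q.map (P.map (Q.map g)) := fun g => τ.naturality g
  have wnat : ∀ {a b : A} (f : a ⟶ b),
      Q.map (P.map f) ≫ w.app b = w.app a ≫ Rf.map f := fun f => w.naturality f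
  have rnat : ∀ {a b : A} (f : a ⟶ b),
      f ≫ r.app b = r.app a ≫ Rf.map f := fun f => r.naturality f
  have εnatgen : ∀ (ε : Cf ⟶ 𝟭 A) {a b : A} (f : a ⟶ b),
      Cf.map f ≫ ε.app b = ε.app a ≫ f := fun ε {a b} f => ε.naturality f
  have wiX : ∀ X : A, i.app X ≫ ωl.app X = i.app X ≫ ωr.app X :=
    fun X => congr_app wi X
  -- pointwise limit forks
  have hiX : ∀ X : A, IsLimit (Fork.ofι (i.app X)
      (show i.app X ≫ ωl.app X = i.app X ≫ ωr.app X from wiX X)) := fun X =>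
    isLimitForkMapOfIsLimit ((evaluation A A).obj X) wi hi
  have hrX : ∀ X : A, IsLimit (Fork.ofι (r.app X)
      (show r.app X ≫ r.app (Rf.obj X) = r.app X ≫ Rf.map (r.app X) from congr_app wr X)) :=
    fun X => isLimitForkMapOfIsLimit ((evaluation A A).obj X) wr hr
  have hQPiX := fun X : A => isLimitForkMapOfIsLimit (P ⋙ Q) _ (hiX X)
  have hQPQPiX := fun X : A => isLimitForkMapOfIsLimit (P ⋙ Q) _ (hQPiX X)
  have hQPrX := fun X : A => isLimitForkMapOfIsLimit (P ⋙ Q) _ (hrX X)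
  have mono_i : ∀ X : A, Mono (i.app X) := fun X => mono_of_isLimit_fork (hiX X)
  have mono_r : ∀ X : A, Mono (r.app X) := fun X => mono_of_isLimit_fork (hrX X)
  have mono_QPi : ∀ X : A, Mono (Q.map (P.map (i.app X))) :=
    fun X => mono_of_isLimit_fork (hQPiX X)
  have mono_QPQPi : ∀ X : A, Mono (Q.map (P.map (Q.map (P.map (i.app X))))) :=
    fun X => mono_of_isLimit_fork (hQPQPiX X)
  have mono_QPr : ∀ X : A, Mono (Q.map (P.map (r.app X))) :=
    fun X => mono_of_isLimit_fork (hQPrX X)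
  -- `Cf` preserves equalizers
  have key : ∀ {a b : A} (f g : a ⟶ b) {e : A} (ι : e ⟶ a) (hfg : ι ≫ f = ι ≫ g),
      IsLimit (Fork.ofι ι hfg) →
      IsLimit (Fork.ofι (Cf.map ι) (show Cf.map ι ≫ Cf.map f = Cf.map ι ≫ Cf.map g by
        rw [← Cf.map_comp, ← Cf.map_comp, hfg])) := by
    intro a b f g e ι hfg ht
    have hQPt := isLimitForkMapOfIsLimit (P ⋙ Q) hfg ht
    have hRt := isLimitForkMapOfIsLimit (Rf ⋙ P ⋙ Q) hfg ht
    haveI : Mono ((Rf ⋙ P ⋙ Q).map ι) := mono_of_isLimit_fork hRt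
    haveI : Mono ((P ⋙ Q).map ι) := mono_of_isLimit_fork hQPt
    haveI := mono_i a
    haveI := mono_i e
    apply Fork.IsLimit.mk'
    intro sf
    have hs1 : (sf.ι ≫ i.app a) ≫ (P ⋙ Q).map f = (sf.ι ≫ i.app a) ≫ (P ⋙ Q).map g := by
      calc (sf.ι ≫ i.app a) ≫ (P ⋙ Q).map f
          = sf.ι ≫ Cf.map f ≫ i.app b := by rw [Category.assoc, i.naturality f]
        _ = (sf.ι ≫ Cf.map f) ≫ i.app b := by rw [Category.assoc]
        _ = (sf.ι ≫ Cf.map g) ≫ i.app b := by rw [sf.condition]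
        _ = sf.ι ≫ Cf.map g ≫ i.app b := by rw [Category.assoc]
        _ = (sf.ι ≫ i.app a) ≫ (P ⋙ Q).map g := by rw [i.naturality g, Category.assoc]
    obtain ⟨u, hu⟩ := Fork.IsLimit.lift' hQPt (sf.ι ≫ i.app a) hs1
    rw [Fork.ι_ofι] at hu
    have hs2 : u ≫ ωl.app e = u ≫ ωr.app e := by
      rw [← cancel_mono ((Rf ⋙ P ⋙ Q).map ι)]
      calc (u ≫ ωl.app e) ≫ (Rf ⋙ P ⋙ Q).map ι
          = u ≫ (P ⋙ Q).map ι ≫ ωl.app a := by rw [Category.assoc, ωl.naturality ι]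
        _ = (u ≫ (P ⋙ Q).map ι) ≫ ωl.app a := by rw [Category.assoc]
        _ = (sf.ι ≫ i.app a) ≫ ωl.app a := by rw [hu]
        _ = sf.ι ≫ i.app a ≫ ωl.app a := by rw [Category.assoc]
        _ = sf.ι ≫ i.app a ≫ ωr.app a := by rw [wiX a]
        _ = (sf.ι ≫ i.app a) ≫ ωr.app a := by rw [Category.assoc]
        _ = (u ≫ (P ⋙ Q).map ι) ≫ ωr.app a := by rw [hu]
        _ = u ≫ (P ⋙ Q).map ι ≫ ωr.app a := by rw [Category.assoc]
        _ = (u ≫ ωr.app e) ≫ (Rf ⋙ P ⋙ Q).map ι := by rw [ωr.naturality ι, Category.assoc]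
    obtain ⟨v, hv⟩ := Fork.IsLimit.lift' (hiX e) u hs2
    rw [Fork.ι_ofι] at hv
    refine ⟨v, ?_, ?_⟩
    · show v ≫ Cf.map ι = sf.ι
      rw [← cancel_mono (i.app a)]
      calc (v ≫ Cf.map ι) ≫ i.app a
          = v ≫ Cf.map ι ≫ i.app a := by rw [Category.assoc]
        _ = v ≫ i.app e ≫ (P ⋙ Q).map ι := by rw [inat (a := e) (b := a) ι]; rfl
        _ = (v ≫ i.app e) ≫ (P ⋙ Q).map ι := by rw [Category.assoc]
        _ = u ≫ (P ⋙ Q).map ι := by rw [hv]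
        _ = sf.ι ≫ i.app a := hu
    · intro m hm
      have hm' : m ≫ Cf.map ι = sf.ι := hm
      rw [← cancel_mono (i.app e)]
      have : (m ≫ i.app e) ≫ (P ⋙ Q).map ι = (v ≫ i.app e) ≫ (P ⋙ Q).map ι := by
        calc (m ≫ i.app e) ≫ (P ⋙ Q).map ι
            = m ≫ i.app e ≫ (P ⋙ Q).map ι := by rw [Category.assoc]
          _ = m ≫ Cf.map ι ≫ i.app a := by rw [inat (a := e) (b := a) ι]; rfl
          _ = (m ≫ Cf.map ι) ≫ i.app a := by rw [Category.assoc]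
          _ = sf.ι ≫ i.app a := by rw [hm']
          _ = u ≫ (P ⋙ Q).map ι := hu.symm
          _ = (v ≫ i.app e) ≫ (P ⋙ Q).map ι := by rw [hv]
      exact (cancel_mono ((P ⋙ Q).map ι)).mp this
  have ppres : ∀ {a b : A} (f g : a ⟶ b), PreservesLimit (parallelPair f g) Cf := fun f g =>
    preservesLimit_of_preserves_limit_cone (equalizerIsEqualizer f g)
      ((isLimitMapConeForkEquiv Cf (equalizer.condition f g)).symm
        (key f g (equalizer.ι f g) (equalizer.condition f g) (equalizerIsEqualizer f g)))
  have CP : PreservesLimitsOfShape WalkingParallelPair Cf := by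
    constructor
    intro K
    haveI := ppres (K.map WalkingParallelPairHom.left) (K.map WalkingParallelPairHom.right)
    exact preservesLimit_of_iso_diagram Cf (diagramIsoParallelPair K).symm
  haveI := CP
  -- construction of the counit ε
  have hεw : (i ≫ w) ≫ (Functor.whiskerLeft Rf r : Rf ⟶ Rf ⋙ Rf) =
      (i ≫ w) ≫ (Functor.whiskerRight r Rf : Rf ⟶ Rf ⋙ Rf) := by
    ext X
    show (i.app X ≫ w.app X) ≫ r.app (Rf.obj X) = (i.app X ≫ w.app X) ≫ Rf.map (r.app X)
    calc (i.app X ≫ w.app X) ≫ r.app (Rf.obj X)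
        = i.app X ≫ w.app X ≫ r.app (Rf.obj X) := by rw [Category.assoc]
      _ = i.app X ≫ r.app (Q.obj (P.obj X)) ≫ Rf.map (w.app X) := by rw [rnat (a := Q.obj (P.obj X)) (b := Rf.obj X) (w.app X)]
      _ = i.app X ≫ (τ.app (P.obj X) ≫ w.app (Q.obj (P.obj X))) ≫ Rf.map (w.app X) := by
          rw [hw (P.obj X)]
      _ = i.app X ≫ τ.app (P.obj X) ≫ w.app (Q.obj (P.obj X)) ≫ Rf.map (w.app X) := by
          rw [Category.assoc]
      _ = i.app X ≫ τ.app (P.obj X) ≫ Q.map (P.map (w.app X)) ≫ w.app (Rf.obj X) := by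
          rw [wnat (a := Q.obj (P.obj X)) (b := Rf.obj X) (w.app X)]
      _ = i.app X ≫ (τ.app (P.obj X) ≫ Q.map (P.map (w.app X))) ≫ w.app (Rf.obj X) := by
          rw [Category.assoc]
      _ = i.app X ≫ ωl.app X ≫ w.app (Rf.obj X) := by rw [← hωl X]
      _ = (i.app X ≫ ωl.app X) ≫ w.app (Rf.obj X) := by rw [Category.assoc]
      _ = (i.app X ≫ ωr.app X) ≫ w.app (Rf.obj X) := by rw [wiX X]
      _ = i.app X ≫ Q.map (P.map (r.app X)) ≫ w.app (Rf.obj X) := by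
          rw [hωr X, Category.assoc]
      _ = i.app X ≫ w.app X ≫ Rf.map (r.app X) := by rw [wnat (a := X) (b := Rf.obj X) (r.app X)]
      _ = (i.app X ≫ w.app X) ≫ Rf.map (r.app X) := by rw [Category.assoc]
  obtain ⟨ε, hε⟩ := Fork.IsLimit.lift' hr (i ≫ w) hεw
  have keyε : ∀ X : A, ε.app X ≫ r.app X = i.app X ≫ w.app X := fun X => congr_app hε X
  -- construction of the coaction c
  have hτf : τ ≫ ((Functor.whiskeringLeft B A A).obj Q).map ωl =
      τ ≫ ((Functor.whiskeringLeft B A A).obj Q).map ωr := by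
    ext Y
    show τ.app Y ≫ ωl.app (Q.obj Y) = τ.app Y ≫ ωr.app (Q.obj Y)
    calc τ.app Y ≫ ωl.app (Q.obj Y)
        = τ.app Y ≫ τ.app (P.obj (Q.obj Y)) ≫ Q.map (P.map (w.app (Q.obj Y))) := by
          rw [hωl (Q.obj Y)]
      _ = (τ.app Y ≫ τ.app (P.obj (Q.obj Y))) ≫ Q.map (P.map (w.app (Q.obj Y))) := by
          rw [Category.assoc]
      _ = (τ.app Y ≫ Q.map (P.map (τ.app Y))) ≫ Q.map (P.map (w.app (Q.obj Y))) := by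
          rw [hτ Y]
      _ = τ.app Y ≫ Q.map (P.map (τ.app Y)) ≫ Q.map (P.map (w.app (Q.obj Y))) := by
          rw [Category.assoc]
      _ = τ.app Y ≫ Q.map (P.map (τ.app Y ≫ w.app (Q.obj Y))) := by
          rw [← Q.map_comp, ← P.map_comp]
      _ = τ.app Y ≫ Q.map (P.map (r.app (Q.obj Y))) := by rw [hw Y]
      _ = τ.app Y ≫ ωr.app (Q.obj Y) := by rw [hωr (Q.obj Y)]
  obtain ⟨c, hc⟩ := Fork.IsLimit.lift'
    (isLimitForkMapOfIsLimit ((Functor.whiskeringLeft B A A).obj Q) wi hi) τ hτf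
  have keyc : ∀ Y : B, c.app Y ≫ i.app (Q.obj Y) = τ.app Y := fun Y => congr_app hc Y
  -- construction of the comultiplication δ, first step: d1
  have hd1cond : (i ≫ Functor.whiskerLeft P τ) ≫ ((Functor.whiskeringLeft A A A).obj (P ⋙ Q)).map ωl =
      (i ≫ Functor.whiskerLeft P τ) ≫ ((Functor.whiskeringLeft A A A).obj (P ⋙ Q)).map ωr := by
    ext X
    show (i.app X ≫ τ.app (P.obj X)) ≫ ωl.app (Q.obj (P.obj X)) =
      (i.app X ≫ τ.app (P.obj X)) ≫ ωr.app (Q.obj (P.obj X))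
    have h1 : τ.app (P.obj X) ≫ ωl.app (Q.obj (P.obj X)) =
        τ.app (P.obj X) ≫ ωr.app (Q.obj (P.obj X)) := by
      calc τ.app (P.obj X) ≫ ωl.app (Q.obj (P.obj X))
          = τ.app (P.obj X) ≫ τ.app (P.obj (Q.obj (P.obj X))) ≫
              Q.map (P.map (w.app (Q.obj (P.obj X)))) := by rw [hωl (Q.obj (P.obj X))]
        _ = (τ.app (P.obj X) ≫ τ.app (P.obj (Q.obj (P.obj X)))) ≫
              Q.map (P.map (w.app (Q.obj (P.obj X)))) := by rw [Category.assoc]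
        _ = (τ.app (P.obj X) ≫ Q.map (P.map (τ.app (P.obj X)))) ≫
              Q.map (P.map (w.app (Q.obj (P.obj X)))) := by rw [hτ (P.obj X)]
        _ = τ.app (P.obj X) ≫ Q.map (P.map (τ.app (P.obj X) ≫ w.app (Q.obj (P.obj X)))) := by
              rw [Category.assoc, ← Q.map_comp, ← P.map_comp]
        _ = τ.app (P.obj X) ≫ Q.map (P.map (r.app (Q.obj (P.obj X)))) := by rw [hw (P.obj X)]
        _ = τ.app (P.obj X) ≫ ωr.app (Q.obj (P.obj X)) := by rw [hωr (Q.obj (P.obj X))]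
    rw [Category.assoc, Category.assoc, h1]
  obtain ⟨d1, hd1⟩ := Fork.IsLimit.lift'
    (isLimitForkMapOfIsLimit ((Functor.whiskeringLeft A A A).obj (P ⋙ Q)) wi hi)
    (i ≫ Functor.whiskerLeft P τ) hd1cond
  have keyd1 : ∀ X : A, d1.app X ≫ i.app (Q.obj (P.obj X)) = i.app X ≫ τ.app (P.obj X) :=
    fun X => congr_app hd1 X
  -- a computation used for the second step
  have hstep : ∀ X : A, i.app X ≫ τ.app (P.obj X) ≫ Q.map (P.map (ωl.app X)) =
      i.app X ≫ τ.app (P.obj X) ≫ Q.map (P.map (ωr.app X)) := by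
    intro X
    have hτn := τnat (Y := P.obj (Q.obj (P.obj X))) (Y' := P.obj (Rf.obj X)) (P.map (w.app X))
    have hτn2 := τnat (Y := P.obj X) (Y' := P.obj (Rf.obj X)) (P.map (r.app X))
    calc i.app X ≫ τ.app (P.obj X) ≫ Q.map (P.map (ωl.app X))
        = i.app X ≫ τ.app (P.obj X) ≫ Q.map (P.map (τ.app (P.obj X))) ≫
            Q.map (P.map (Q.map (P.map (w.app X)))) := by
          rw [hωl X, P.map_comp, Q.map_comp]
      _ = i.app X ≫ (τ.app (P.obj X) ≫ Q.map (P.map (τ.app (P.obj X)))) ≫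
            Q.map (P.map (Q.map (P.map (w.app X)))) := by rw [Category.assoc]
      _ = i.app X ≫ (τ.app (P.obj X) ≫ τ.app (P.obj (Q.obj (P.obj X)))) ≫
            Q.map (P.map (Q.map (P.map (w.app X)))) := by rw [hτ (P.obj X)]
      _ = i.app X ≫ τ.app (P.obj X) ≫ τ.app (P.obj (Q.obj (P.obj X))) ≫
            Q.map (P.map (Q.map (P.map (w.app X)))) := by rw [Category.assoc]
      _ = i.app X ≫ τ.app (P.obj X) ≫ Q.map (P.map (w.app X)) ≫ τ.app (P.obj (Rf.obj X)) := by
          rw [← hτn]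
      _ = (i.app X ≫ τ.app (P.obj X) ≫ Q.map (P.map (w.app X))) ≫ τ.app (P.obj (Rf.obj X)) := by
          rw [Category.assoc, Category.assoc]
      _ = (i.app X ≫ ωl.app X) ≫ τ.app (P.obj (Rf.obj X)) := by rw [hωl X]
      _ = (i.app X ≫ ωr.app X) ≫ τ.app (P.obj (Rf.obj X)) := by rw [wiX X]
      _ = i.app X ≫ Q.map (P.map (r.app X)) ≫ τ.app (P.obj (Rf.obj X)) := by
          rw [hωr X, Category.assoc]
      _ = i.app X ≫ τ.app (P.obj X) ≫ Q.map (P.map (Q.map (P.map (r.app X)))) := by rw [hτn2]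
      _ = i.app X ≫ τ.app (P.obj X) ≫ Q.map (P.map (ωr.app X)) := by rw [hωr X]
  -- second step: δ
  have hδcond : d1 ≫ ((Functor.whiskeringRight A A A).obj Cf).map ωl =
      d1 ≫ ((Functor.whiskeringRight A A A).obj Cf).map ωr := by
    ext X
    show d1.app X ≫ Cf.map (ωl.app X) = d1.app X ≫ Cf.map (ωr.app X)
    haveI := mono_i (Q.obj (P.obj (Rf.obj X)))
    rw [← cancel_mono (i.app (Q.obj (P.obj (Rf.obj X))))]
    calc (d1.app X ≫ Cf.map (ωl.app X)) ≫ i.app (Q.obj (P.obj (Rf.obj X)))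
        = d1.app X ≫ Cf.map (ωl.app X) ≫ i.app (Q.obj (P.obj (Rf.obj X))) := by
          rw [Category.assoc]
      _ = d1.app X ≫ i.app (Q.obj (P.obj X)) ≫ Q.map (P.map (ωl.app X)) := by
          rw [inat (a := Q.obj (P.obj X)) (b := Q.obj (P.obj (Rf.obj X))) (ωl.app X)]
      _ = (d1.app X ≫ i.app (Q.obj (P.obj X))) ≫ Q.map (P.map (ωl.app X)) := by
          rw [Category.assoc]
      _ = (i.app X ≫ τ.app (P.obj X)) ≫ Q.map (P.map (ωl.app X)) := by rw [keyd1 X]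
      _ = i.app X ≫ τ.app (P.obj X) ≫ Q.map (P.map (ωl.app X)) := by rw [Category.assoc]
      _ = i.app X ≫ τ.app (P.obj X) ≫ Q.map (P.map (ωr.app X)) := hstep X
      _ = (i.app X ≫ τ.app (P.obj X)) ≫ Q.map (P.map (ωr.app X)) := by rw [Category.assoc]
      _ = (d1.app X ≫ i.app (Q.obj (P.obj X))) ≫ Q.map (P.map (ωr.app X)) := by rw [keyd1 X]
      _ = d1.app X ≫ i.app (Q.obj (P.obj X)) ≫ Q.map (P.map (ωr.app X)) := by
          rw [Category.assoc]
      _ = d1.app X ≫ Cf.map (ωr.app X) ≫ i.app (Q.obj (P.obj (Rf.obj X))) := by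
          rw [inat (a := Q.obj (P.obj X)) (b := Q.obj (P.obj (Rf.obj X))) (ωr.app X)]
      _ = (d1.app X ≫ Cf.map (ωr.app X)) ≫ i.app (Q.obj (P.obj (Rf.obj X))) := by
          rw [Category.assoc]
  obtain ⟨δ, hδ⟩ := Fork.IsLimit.lift'
    (isLimitForkMapOfIsLimit ((Functor.whiskeringRight A A A).obj Cf) wi hi) d1 hδcond
  have hδX : ∀ X : A, δ.app X ≫ Cf.map (i.app X) = d1.app X := fun X => congr_app hδ X
  have keyδ : ∀ X : A, δ.app X ≫ Cf.map (i.app X) ≫ i.app (Q.obj (P.obj X)) =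
      i.app X ≫ τ.app (P.obj X) := by
    intro X
    rw [← Category.assoc, hδX X, keyd1 X]
  have keyδ' : ∀ X : A, δ.app X ≫ i.app (Cf.obj X) ≫ Q.map (P.map (i.app X)) =
      i.app X ≫ τ.app (P.obj X) := by
    intro X
    rw [← inat (i.app X)]
    exact keyδ X
  -- finish
  refine ⟨⟨CP⟩, δ, ε, c, keyδ, keyε, ?_, ?_, ?_, keyc, ?_, ?_, ?_⟩
  · -- coassociativity of δ
    intro X
    haveI := mono_i (Cf.obj (Cf.obj X))
    haveI := mono_QPi (Cf.obj X)
    haveI := mono_QPQPi X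
    rw [← cancel_mono (i.app (Cf.obj (Cf.obj X))),
      ← cancel_mono (Q.map (P.map (i.app (Cf.obj X)))),
      ← cancel_mono (Q.map (P.map (Q.map (P.map (i.app X)))))]
    calc (((δ.app X ≫ Cf.map (δ.app X)) ≫ i.app (Cf.obj (Cf.obj X))) ≫
            Q.map (P.map (i.app (Cf.obj X)))) ≫ Q.map (P.map (Q.map (P.map (i.app X))))
        = δ.app X ≫ (Cf.map (δ.app X) ≫ i.app (Cf.obj (Cf.obj X))) ≫
            Q.map (P.map (i.app (Cf.obj X))) ≫ Q.map (P.map (Q.map (P.map (i.app X)))) := by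
          simp only [Category.assoc]
      _ = δ.app X ≫ (i.app (Cf.obj X) ≫ Q.map (P.map (δ.app X))) ≫
            Q.map (P.map (i.app (Cf.obj X))) ≫ Q.map (P.map (Q.map (P.map (i.app X)))) := by
          rw [inat (a := Cf.obj X) (b := Cf.obj (Cf.obj X)) (δ.app X)]
      _ = δ.app X ≫ i.app (Cf.obj X) ≫
            Q.map (P.map (δ.app X ≫ i.app (Cf.obj X) ≫ Q.map (P.map (i.app X)))) := by
          simp only [Functor.map_comp, Category.assoc]
      _ = δ.app X ≫ i.app (Cf.obj X) ≫
            Q.map (P.map (i.app X ≫ τ.app (P.obj X))) := by rw [keyδ' X]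
      _ = δ.app X ≫ i.app (Cf.obj X) ≫ Q.map (P.map (i.app X)) ≫
            Q.map (P.map (τ.app (P.obj X))) := by simp only [Functor.map_comp]
      _ = (δ.app X ≫ i.app (Cf.obj X) ≫ Q.map (P.map (i.app X))) ≫
            Q.map (P.map (τ.app (P.obj X))) := by simp only [Category.assoc]
      _ = (i.app X ≫ τ.app (P.obj X)) ≫ Q.map (P.map (τ.app (P.obj X))) := by rw [keyδ' X]
      _ = i.app X ≫ τ.app (P.obj X) ≫ Q.map (P.map (τ.app (P.obj X))) := by
          rw [Category.assoc]
      _ = i.app X ≫ τ.app (P.obj X) ≫ τ.app (P.obj (Q.obj (P.obj X))) := by rw [hτ (P.obj X)]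
      _ = (i.app X ≫ τ.app (P.obj X)) ≫ τ.app (P.obj (Q.obj (P.obj X))) := by
          rw [Category.assoc]
      _ = (δ.app X ≫ i.app (Cf.obj X) ≫ Q.map (P.map (i.app X))) ≫
            τ.app (P.obj (Q.obj (P.obj X))) := by rw [keyδ' X]
      _ = δ.app X ≫ i.app (Cf.obj X) ≫ Q.map (P.map (i.app X)) ≫
            τ.app (P.obj (Q.obj (P.obj X))) := by simp only [Category.assoc]
      _ = δ.app X ≫ i.app (Cf.obj X) ≫ τ.app (P.obj (Cf.obj X)) ≫
            Q.map (P.map (Q.map (P.map (i.app X)))) := by rw [τnat (Y := P.obj (Cf.obj X)) (Y' := P.obj (Q.obj (P.obj X))) (P.map (i.app X))]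
      _ = δ.app X ≫ (i.app (Cf.obj X) ≫ τ.app (P.obj (Cf.obj X))) ≫
            Q.map (P.map (Q.map (P.map (i.app X)))) := by simp only [Category.assoc]
      _ = δ.app X ≫ (δ.app (Cf.obj X) ≫ i.app (Cf.obj (Cf.obj X)) ≫
            Q.map (P.map (i.app (Cf.obj X)))) ≫ Q.map (P.map (Q.map (P.map (i.app X)))) := by
          rw [keyδ' (Cf.obj X)]
      _ = (((δ.app X ≫ δ.app (Cf.obj X)) ≫ i.app (Cf.obj (Cf.obj X))) ≫
            Q.map (P.map (i.app (Cf.obj X)))) ≫ Q.map (P.map (Q.map (P.map (i.app X)))) := by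
          simp only [Category.assoc]
  · -- left counit law
    intro X
    haveI := mono_i X
    haveI := mono_r (Q.obj (P.obj X))
    rw [← cancel_mono (i.app X), ← cancel_mono (r.app (Q.obj (P.obj X)))]
    calc ((δ.app X ≫ ε.app (Cf.obj X)) ≫ i.app X) ≫ r.app (Q.obj (P.obj X))
        = δ.app X ≫ (ε.app (Cf.obj X) ≫ i.app X) ≫ r.app (Q.obj (P.obj X)) := by
          simp only [Category.assoc]
      _ = δ.app X ≫ (Cf.map (i.app X) ≫ ε.app (Q.obj (P.obj X))) ≫ r.app (Q.obj (P.obj X)) := by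
          rw [εnatgen ε (a := Cf.obj X) (b := Q.obj (P.obj X)) (i.app X)]
      _ = δ.app X ≫ Cf.map (i.app X) ≫ ε.app (Q.obj (P.obj X)) ≫ r.app (Q.obj (P.obj X)) := by
          simp only [Category.assoc]
      _ = δ.app X ≫ Cf.map (i.app X) ≫ i.app (Q.obj (P.obj X)) ≫ w.app (Q.obj (P.obj X)) := by
          rw [keyε (Q.obj (P.obj X))]
      _ = (δ.app X ≫ Cf.map (i.app X) ≫ i.app (Q.obj (P.obj X))) ≫ w.app (Q.obj (P.obj X)) := by
          simp only [Category.assoc]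
      _ = (i.app X ≫ τ.app (P.obj X)) ≫ w.app (Q.obj (P.obj X)) := by rw [keyδ X]
      _ = i.app X ≫ τ.app (P.obj X) ≫ w.app (Q.obj (P.obj X)) := by rw [Category.assoc]
      _ = i.app X ≫ r.app (Q.obj (P.obj X)) := by rw [hw (P.obj X)]
      _ = (𝟙 (Cf.obj X) ≫ i.app X) ≫ r.app (Q.obj (P.obj X)) := by
          rw [Category.id_comp]
  · -- right counit law
    intro X
    haveI := mono_i X
    haveI := mono_QPr X
    rw [← cancel_mono (i.app X), ← cancel_mono (Q.map (P.map (r.app X)))]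
    calc ((δ.app X ≫ Cf.map (ε.app X)) ≫ i.app X) ≫ Q.map (P.map (r.app X))
        = δ.app X ≫ (Cf.map (ε.app X) ≫ i.app X) ≫ Q.map (P.map (r.app X)) := by
          simp only [Category.assoc]
      _ = δ.app X ≫ (i.app (Cf.obj X) ≫ Q.map (P.map (ε.app X))) ≫ Q.map (P.map (r.app X)) := by
          rw [inat (a := Cf.obj X) (b := X) (ε.app X)]
      _ = δ.app X ≫ i.app (Cf.obj X) ≫ Q.map (P.map (ε.app X ≫ r.app X)) := by
          simp only [Functor.map_comp, Category.assoc]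
      _ = δ.app X ≫ i.app (Cf.obj X) ≫ Q.map (P.map (i.app X ≫ w.app X)) := by rw [keyε X]
      _ = (δ.app X ≫ i.app (Cf.obj X) ≫ Q.map (P.map (i.app X))) ≫ Q.map (P.map (w.app X)) := by
          simp only [Functor.map_comp, Category.assoc]
      _ = (i.app X ≫ τ.app (P.obj X)) ≫ Q.map (P.map (w.app X)) := by rw [keyδ' X]
      _ = i.app X ≫ τ.app (P.obj X) ≫ Q.map (P.map (w.app X)) := by rw [Category.assoc]
      _ = i.app X ≫ ωl.app X := by rw [← hωl X]
      _ = i.app X ≫ ωr.app X := wiX X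
      _ = i.app X ≫ Q.map (P.map (r.app X)) := by rw [hωr X]
      _ = (𝟙 (Cf.obj X) ≫ i.app X) ≫ Q.map (P.map (r.app X)) := by
          rw [Category.id_comp]
  · -- uniqueness of c
    intro c' h'
    ext Y
    haveI := mono_i (Q.obj Y)
    rw [← cancel_mono (i.app (Q.obj Y)), h' Y, keyc Y]
  · -- coassociativity of the coaction
    intro Y
    haveI := mono_i (Cf.obj (Q.obj Y))
    haveI := mono_QPi (Q.obj Y)
    rw [← cancel_mono (i.app (Cf.obj (Q.obj Y))), ← cancel_mono (Q.map (P.map (i.app (Q.obj Y))))]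
    calc ((c.app Y ≫ δ.app (Q.obj Y)) ≫ i.app (Cf.obj (Q.obj Y))) ≫
            Q.map (P.map (i.app (Q.obj Y)))
        = c.app Y ≫ δ.app (Q.obj Y) ≫ i.app (Cf.obj (Q.obj Y)) ≫
            Q.map (P.map (i.app (Q.obj Y))) := by simp only [Category.assoc]
      _ = c.app Y ≫ i.app (Q.obj Y) ≫ τ.app (P.obj (Q.obj Y)) := by rw [keyδ' (Q.obj Y)]
      _ = (c.app Y ≫ i.app (Q.obj Y)) ≫ τ.app (P.obj (Q.obj Y)) := by rw [Category.assoc]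
      _ = τ.app Y ≫ τ.app (P.obj (Q.obj Y)) := by rw [keyc Y]
      _ = τ.app Y ≫ Q.map (P.map (τ.app Y)) := by rw [hτ Y]
      _ = (c.app Y ≫ i.app (Q.obj Y)) ≫ Q.map (P.map (τ.app Y)) := by rw [keyc Y]
      _ = (c.app Y ≫ i.app (Q.obj Y)) ≫ Q.map (P.map (c.app Y ≫ i.app (Q.obj Y))) := by
          rw [keyc Y]
      _ = c.app Y ≫ (i.app (Q.obj Y) ≫ Q.map (P.map (c.app Y))) ≫
            Q.map (P.map (i.app (Q.obj Y))) := by simp only [Functor.map_comp, Category.assoc]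
      _ = c.app Y ≫ (Cf.map (c.app Y) ≫ i.app (Cf.obj (Q.obj Y))) ≫
            Q.map (P.map (i.app (Q.obj Y))) := by rw [inat (a := Q.obj Y) (b := Cf.obj (Q.obj Y)) (c.app Y)]
      _ = ((c.app Y ≫ Cf.map (c.app Y)) ≫ i.app (Cf.obj (Q.obj Y))) ≫
            Q.map (P.map (i.app (Q.obj Y))) := by simp only [Category.assoc]
  · -- counitality of the coaction
    intro Y
    haveI := mono_r (Q.obj Y)
    rw [← cancel_mono (r.app (Q.obj Y))]
    calc (c.app Y ≫ ε.app (Q.obj Y)) ≫ r.app (Q.obj Y)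
        = c.app Y ≫ ε.app (Q.obj Y) ≫ r.app (Q.obj Y) := by rw [Category.assoc]
      _ = c.app Y ≫ i.app (Q.obj Y) ≫ w.app (Q.obj Y) := by rw [keyε (Q.obj Y)]
      _ = (c.app Y ≫ i.app (Q.obj Y)) ≫ w.app (Q.obj Y) := by rw [Category.assoc]
      _ = τ.app Y ≫ w.app (Q.obj Y) := by rw [keyc Y]
      _ = r.app (Q.obj Y) := hw Y
      _ = 𝟙 (Q.obj Y) ≫ r.app (Q.obj Y) := by rw [Category.id_comp]
end

section
/- In the setting of the previous construction (categories A, B with equalizers; equalizer-preserving functors P, Q, R, S with r, s, w, z, τ satisfying conditions (i)–(iii)), Q is a C-D bicomodule functor: the left C-coaction c : Q → CQ and the right D-coaction d : Q → QD (defined by (Qj) ∘ d = τ, where D is the equalizer of θ^l := (zPQ) ∘ (Pτ) and θ^r := sPQ with inclusion j : D → PQ) satisfy (Cd) ∘ c = (cD) ∘ d. -/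
open CategoryTheory CategoryTheory.Limits

/-- In the pre-torsor setting, `Q` is a `C`-`D` bicomodule functor: the left `C`-coaction `c`
(with `(iQ)∘c = τ`) and the right `D`-coaction `d` (with `(Qj)∘d = τ`) satisfy
`(Cd)∘c = (cD)∘d`. -/
theorem stmt16 {A B : Type*} [Category A] [Category B]
    [HasEqualizers A] [HasEqualizers B]
    (P : A ⥤ B) (Q : B ⥤ A) (Rf : A ⥤ A) (S : B ⥤ B)
    [PreservesLimitsOfShape WalkingParallelPair P]
    [PreservesLimitsOfShape WalkingParallelPair Q]
    [PreservesLimitsOfShape WalkingParallelPair Rf]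
    [PreservesLimitsOfShape WalkingParallelPair S]
    (r : 𝟭 A ⟶ Rf) (s : 𝟭 B ⟶ S)
    (w : P ⋙ Q ⟶ Rf) (z : Q ⋙ P ⟶ S) (τ : Q ⟶ Q ⋙ P ⋙ Q)
    (wr : r ≫ (Functor.whiskerLeft Rf r : Rf ⟶ Rf ⋙ Rf) =
      r ≫ (Functor.whiskerRight r Rf : Rf ⟶ Rf ⋙ Rf))
    (hr : IsLimit (Fork.ofι r wr))
    (ws : s ≫ (Functor.whiskerLeft S s : S ⟶ S ⋙ S) =
      s ≫ (Functor.whiskerRight s S : S ⟶ S ⋙ S))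
    (hs : IsLimit (Fork.ofι s ws))
    (hτ : ∀ Y : B, τ.app Y ≫ Q.map (P.map (τ.app Y)) =
      τ.app Y ≫ τ.app (P.obj (Q.obj Y)))
    (hz : ∀ Y : B, τ.app Y ≫ Q.map (z.app Y) = Q.map (s.app Y))
    (hw : ∀ Y : B, τ.app Y ≫ w.app (Q.obj Y) = r.app (Q.obj Y))
    -- the equalizer `(C, i)` of `ω^l = (QPw)∘(τP)` and `ω^r = QPr`
    (ωl ωr : P ⋙ Q ⟶ Rf ⋙ P ⋙ Q)
    (hωl : ∀ X : A, ωl.app X = τ.app (P.obj X) ≫ Q.map (P.map (w.app X)))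
    (hωr : ∀ X : A, ωr.app X = Q.map (P.map (r.app X)))
    (Cf : A ⥤ A) (i : Cf ⟶ P ⋙ Q) (wi : i ≫ ωl = i ≫ ωr)
    (hi : IsLimit (Fork.ofι i wi))
    -- the equalizer `(D, j)` of `θ^l = (zPQ)∘(Pτ)` and `θ^r = sPQ`
    (θl θr : Q ⋙ P ⟶ Q ⋙ P ⋙ S)
    (hθl : ∀ Y : B, θl.app Y = P.map (τ.app Y) ≫ z.app (P.obj (Q.obj Y)))
    (hθr : ∀ Y : B, θr.app Y = s.app (P.obj (Q.obj Y)))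
    (Df : B ⥤ B) (j : Df ⟶ Q ⋙ P) (wj : j ≫ θl = j ≫ θr)
    (hj : IsLimit (Fork.ofι j wj))
    -- the left `C`-coaction `c` and the right `D`-coaction `d` on `Q`
    (c : Q ⟶ Q ⋙ Cf) (hc : ∀ Y : B, c.app Y ≫ i.app (Q.obj Y) = τ.app Y)
    (d : Q ⟶ Df ⋙ Q) (hd : ∀ Y : B, d.app Y ≫ Q.map (j.app Y) = τ.app Y) :
    -- `Q` is a `C`-`D` bicomodule functor: `(Cd)∘c = (cD)∘d`
    ∀ Y : B, c.app Y ≫ Cf.map (d.app Y) = d.app Y ≫ c.app (Df.obj Y) := by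

  intro Y
  -- pointwise limit forks
  have hiX : Mono (i.app (Q.obj (Df.obj Y))) :=
    mono_of_isLimit_fork
      (isLimitForkMapOfIsLimit ((evaluation A A).obj (Q.obj (Df.obj Y))) wi hi)
  have hjY : IsLimit (Fork.ofι (j.app Y)
      (by simpa using congrArg (fun t => NatTrans.app t Y) wj) :
      Fork (θl.app Y) (θr.app Y)) :=
    isLimitForkMapOfIsLimit ((evaluation B B).obj Y) wj hj
  have hQj := isLimitForkMapOfIsLimit Q _ hjY
  have hPQj := isLimitForkMapOfIsLimit P _ hQj
  have hQPQj := isLimitForkMapOfIsLimit Q _ hPQj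
  have hm : Mono (Q.map (P.map (Q.map (j.app Y)))) := mono_of_isLimit_fork hQPQj
  rw [← cancel_mono (i.app (Q.obj (Df.obj Y)))]
  have hnat : Cf.map (d.app Y) ≫ i.app (Q.obj (Df.obj Y)) =
      i.app (Q.obj Y) ≫ Q.map (P.map (d.app Y)) := by
    simpa using i.naturality (d.app Y)
  rw [Category.assoc, hnat, ← Category.assoc, hc Y, Category.assoc, hc (Df.obj Y)]
  rw [← cancel_mono (Q.map (P.map (Q.map (j.app Y))))]
  have hτnat : Q.map (j.app Y) ≫ τ.app (P.obj (Q.obj Y)) =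
      τ.app (Df.obj Y) ≫ Q.map (P.map (Q.map (j.app Y))) := by
    simpa using τ.naturality (j.app Y)
  calc (τ.app Y ≫ Q.map (P.map (d.app Y))) ≫ Q.map (P.map (Q.map (j.app Y)))
      = τ.app Y ≫ Q.map (P.map (d.app Y ≫ Q.map (j.app Y))) := by
        rw [Category.assoc, P.map_comp, Q.map_comp]
    _ = τ.app Y ≫ τ.app (P.obj (Q.obj Y)) := by rw [hd Y, hτ Y]
    _ = (d.app Y ≫ Q.map (j.app Y)) ≫ τ.app (P.obj (Q.obj Y)) := by rw [hd Y]
    _ = d.app Y ≫ τ.app (Df.obj Y) ≫ Q.map (P.map (Q.map (j.app Y))) := by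
        rw [Category.assoc, hτnat]
    _ = (d.app Y ≫ τ.app (Df.obj Y)) ≫ Q.map (P.map (Q.map (j.app Y))) := by
        rw [Category.assoc]
end

section
/- In the setting of the cotensor construction from a pre-torsor datum (categories A, B with equalizers; equalizer-preserving functors P, Q, R, S with r, s, w, z, τ satisfying conditions (i)–(iii)), the functor Q̄ defined as the equalizer of (θ^l P) ∘ (Pi) and (θ^r P) ∘ (Pi) : PC → SPQP is naturally isomorphic to the functor Q̄' defined as the equalizer of (Pω^l) ∘ (jP) and (Pω^r) ∘ (jP) : DP → PQPR, and Q̄ carries the structure of a D-C bicomodule functor, with C-coaction c̄ determined by (qC) ∘ c̄ = (PΔ^C) ∘ q and D-coaction d̄ determined by (Dq') ∘ d̄ = (Δ^D P) ∘ q', where q : Q̄ → PC and q' : Q̄' → DP are the equalizer inclusions. -/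
open CategoryTheory CategoryTheory.Limits

section Toolkit

variable {C : Type*} [Category C]

/-- cancel an equalizer inclusion -/
theorem ecancel {X Y Z : C} {f g : Y ⟶ Z} {ι : X ⟶ Y} {w : ι ≫ f = ι ≫ g}
    (h : IsLimit (Fork.ofι ι w)) {W : C} {a b : W ⟶ X}
    (e : a ≫ ι = b ≫ ι) : a = b :=
  Fork.IsLimit.hom_ext h e

/-- lift through an equalizer inclusion -/
noncomputable def elift {X Y Z : C} {f g : Y ⟶ Z} {ι : X ⟶ Y} {w : ι ≫ f = ι ≫ g}
    (h : IsLimit (Fork.ofι ι w)) {W : C} (k : W ⟶ Y) (hk : k ≫ f = k ≫ g) :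
    W ⟶ X :=
  (Fork.IsLimit.lift' h k hk).1

theorem elift_fac {X Y Z : C} {f g : Y ⟶ Z} {ι : X ⟶ Y} {w : ι ≫ f = ι ≫ g}
    (h : IsLimit (Fork.ofι ι w)) {W : C} (k : W ⟶ Y) (hk : k ≫ f = k ≫ g) :
    elift h k hk ≫ ι = k :=
  (Fork.IsLimit.lift' h k hk).2

end Toolkit

section Pointwise

variable {A B : Type*} [Category A] [Category B] [HasEqualizers B]

/-- pointwise limit from a fork of natural transformations -/
noncomputable def natForkIsLimit {F G E : A ⥤ B} {l r : F ⟶ G} {ι : E ⟶ F}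
    {w : ι ≫ l = ι ≫ r} (h : IsLimit (Fork.ofι ι w)) (X : A) :
    IsLimit (Fork.ofι (ι.app X)
      (show ι.app X ≫ l.app X = ι.app X ≫ r.app X from
        congrArg (fun α => NatTrans.app α X) w)) :=
  (isLimitForkMapOfIsLimit ((evaluation A B).obj X) w h).ofIsoLimit
    (Fork.ext (Iso.refl _) (by simp))

end Pointwise

/-- In the pre-torsor setting, the functor `Q̄` (equalizer of `(θ^l P)∘(Pi)` and
`(θ^r P)∘(Pi)`) is naturally isomorphic to `Q̄'` (equalizer of `(Pω^l)∘(jP)` and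
`(Pω^r)∘(jP)`), compatibly with the inclusions, and `Q̄` carries a `D`-`C` bicomodule
structure with coactions determined by `(qC)∘c̄ = (PΔ^C)∘q` and `(Dq')∘d̄ = (Δ^D P)∘q'`. -/
theorem stmt18 {A B : Type*} [Category A] [Category B]
    [HasEqualizers A] [HasEqualizers B]
    (P : A ⥤ B) (Q : B ⥤ A) (Rf : A ⥤ A) (S : B ⥤ B)
    [PreservesLimitsOfShape WalkingParallelPair P]
    [PreservesLimitsOfShape WalkingParallelPair Q]
    [PreservesLimitsOfShape WalkingParallelPair Rf]
    [PreservesLimitsOfShape WalkingParallelPair S]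
    (r : 𝟭 A ⟶ Rf) (s : 𝟭 B ⟶ S)
    (w : P ⋙ Q ⟶ Rf) (z : Q ⋙ P ⟶ S) (τ : Q ⟶ Q ⋙ P ⋙ Q)
    (wr : r ≫ (Functor.whiskerLeft Rf r : Rf ⟶ Rf ⋙ Rf) =
      r ≫ (Functor.whiskerRight r Rf : Rf ⟶ Rf ⋙ Rf))
    (hr : IsLimit (Fork.ofι r wr))
    (ws : s ≫ (Functor.whiskerLeft S s : S ⟶ S ⋙ S) =
      s ≫ (Functor.whiskerRight s S : S ⟶ S ⋙ S))
    (hs : IsLimit (Fork.ofι s ws))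
    (hτ : ∀ Y : B, τ.app Y ≫ Q.map (P.map (τ.app Y)) =
      τ.app Y ≫ τ.app (P.obj (Q.obj Y)))
    (hz : ∀ Y : B, τ.app Y ≫ Q.map (z.app Y) = Q.map (s.app Y))
    (hw : ∀ Y : B, τ.app Y ≫ w.app (Q.obj Y) = r.app (Q.obj Y))
    -- the comonad `C` on `A`
    (ωl ωr : P ⋙ Q ⟶ Rf ⋙ P ⋙ Q)
    (hωl : ∀ X : A, ωl.app X = τ.app (P.obj X) ≫ Q.map (P.map (w.app X)))
    (hωr : ∀ X : A, ωr.app X = Q.map (P.map (r.app X)))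
    (Cf : A ⥤ A) (i : Cf ⟶ P ⋙ Q) (wi : i ≫ ωl = i ≫ ωr)
    (hi : IsLimit (Fork.ofι i wi))
    (δC : Cf ⟶ Cf ⋙ Cf) (εC : Cf ⟶ 𝟭 A)
    (hδC : ∀ X : A, δC.app X ≫ Cf.map (i.app X) ≫ i.app (Q.obj (P.obj X)) =
      i.app X ≫ τ.app (P.obj X))
    (hεC : ∀ X : A, εC.app X ≫ r.app X = i.app X ≫ w.app X)
    -- the comonad `D` on `B`
    (θl θr : Q ⋙ P ⟶ Q ⋙ P ⋙ S)
    (hθl : ∀ Y : B, θl.app Y = P.map (τ.app Y) ≫ z.app (P.obj (Q.obj Y)))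
    (hθr : ∀ Y : B, θr.app Y = s.app (P.obj (Q.obj Y)))
    (Df : B ⥤ B) (j : Df ⟶ Q ⋙ P) (wj : j ≫ θl = j ≫ θr)
    (hj : IsLimit (Fork.ofι j wj))
    (δD : Df ⟶ Df ⋙ Df) (εD : Df ⟶ 𝟭 B)
    (hδD : ∀ Y : B, δD.app Y ≫ Df.map (j.app Y) ≫ j.app (P.obj (Q.obj Y)) =
      j.app Y ≫ P.map (τ.app Y))
    (hεD : ∀ Y : B, εD.app Y ≫ s.app Y = j.app Y ≫ z.app Y)
    -- the equalizer `(Q̄, q)` of `(θ^l P)∘(Pi)` and `(θ^r P)∘(Pi)`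
    (φl φr : Cf ⋙ P ⟶ P ⋙ Q ⋙ P ⋙ S)
    (hφl : ∀ X : A, φl.app X = P.map (i.app X) ≫ θl.app (P.obj X))
    (hφr : ∀ X : A, φr.app X = P.map (i.app X) ≫ θr.app (P.obj X))
    (Qb : A ⥤ B) (q : Qb ⟶ Cf ⋙ P) (wq : q ≫ φl = q ≫ φr)
    (hq : IsLimit (Fork.ofι q wq))
    -- the equalizer `(Q̄', q')` of `(Pω^l)∘(jP)` and `(Pω^r)∘(jP)`
    (ψl ψr : P ⋙ Df ⟶ Rf ⋙ P ⋙ Q ⋙ P)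
    (hψl : ∀ X : A, ψl.app X = j.app (P.obj X) ≫ P.map (ωl.app X))
    (hψr : ∀ X : A, ψr.app X = j.app (P.obj X) ≫ P.map (ωr.app X))
    (Qb' : A ⥤ B) (q' : Qb' ⟶ P ⋙ Df) (wq' : q' ≫ ψl = q' ≫ ψr)
    (hq' : IsLimit (Fork.ofι q' wq')) :
    -- `Q̄' ≅ Q̄`, compatibly with the two inclusions
    ∃ ν : Qb' ≅ Qb,
      (∀ X : A, ν.hom.app X ≫ q.app X ≫ P.map (i.app X) =
        q'.app X ≫ j.app (P.obj X)) ∧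
      -- the `C`- and `D`-coactions on `Q̄`
      ∃ (cbar : Qb ⟶ Cf ⋙ Qb) (dbar : Qb ⟶ Qb ⋙ Df),
        -- defining equation of the right `C`-coaction: `(qC)∘c̄ = (PΔ^C)∘q`
        (∀ X : A, cbar.app X ≫ q.app (Cf.obj X) = q.app X ≫ P.map (δC.app X)) ∧
        -- defining equation of the left `D`-coaction: `(Dq')∘d̄ = (Δ^D P)∘q'`
        (∀ X : A, dbar.app X ≫ Df.map (ν.inv.app X ≫ q'.app X) =
          ν.inv.app X ≫ q'.app X ≫ δD.app (P.obj X)) ∧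
        -- coassociativity and counitality of the `C`-coaction
        (∀ X : A, cbar.app X ≫ Qb.map (δC.app X) = cbar.app X ≫ cbar.app (Cf.obj X)) ∧
        (∀ X : A, cbar.app X ≫ Qb.map (εC.app X) = 𝟙 (Qb.obj X)) ∧
        -- coassociativity and counitality of the `D`-coaction
        (∀ X : A, dbar.app X ≫ Df.map (dbar.app X) = dbar.app X ≫ δD.app (Qb.obj X)) ∧
        (∀ X : A, dbar.app X ≫ εD.app (Qb.obj X) = 𝟙 (Qb.obj X)) ∧
        -- the two coactions commute
        (∀ X : A, dbar.app X ≫ Df.map (cbar.app X) = cbar.app X ≫ dbar.app (Cf.obj X)) := by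
  -- specialized naturality statements
  have inat : ∀ {X X' : A} (f : X ⟶ X'),
      Cf.map f ≫ i.app X' = i.app X ≫ Q.map (P.map f) := fun f => i.naturality f
  have jnat : ∀ {Y Y' : B} (g : Y ⟶ Y'),
      Df.map g ≫ j.app Y' = j.app Y ≫ P.map (Q.map g) := fun g => j.naturality g
  have τnat : ∀ {Y Y' : B} (g : Y ⟶ Y'),
      Q.map g ≫ τ.app Y' = τ.app Y ≫ Q.map (P.map (Q.map g)) := fun g => τ.naturality g
  have znat : ∀ {Y Y' : B} (g : Y ⟶ Y'),
      P.map (Q.map g) ≫ z.app Y' = z.app Y ≫ S.map g := fun g => z.naturality g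
  have snat : ∀ {Y Y' : B} (g : Y ⟶ Y'),
      g ≫ s.app Y' = s.app Y ≫ S.map g := fun g => s.naturality g
  have θlnat : ∀ {Y Y' : B} (g : Y ⟶ Y'),
      P.map (Q.map g) ≫ θl.app Y' = θl.app Y ≫ S.map (P.map (Q.map g)) :=
    fun g => θl.naturality g
  have θrnat : ∀ {Y Y' : B} (g : Y ⟶ Y'),
      P.map (Q.map g) ≫ θr.app Y' = θr.app Y ≫ S.map (P.map (Q.map g)) :=
    fun g => θr.naturality g
  have qnat : ∀ {X X' : A} (f : X ⟶ X'),
      Qb.map f ≫ q.app X' = q.app X ≫ P.map (Cf.map f) := fun f => q.naturality f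
  have q'nat : ∀ {X X' : A} (f : X ⟶ X'),
      Qb'.map f ≫ q'.app X' = q'.app X ≫ Df.map (P.map f) := fun f => q'.naturality f
  have δCnat : ∀ {X X' : A} (f : X ⟶ X'),
      Cf.map f ≫ δC.app X' = δC.app X ≫ Cf.map (Cf.map f) := fun f => δC.naturality f
  have δDnat : ∀ {Y Y' : B} (g : Y ⟶ Y'),
      Df.map g ≫ δD.app Y' = δD.app Y ≫ Df.map (Df.map g) := fun g => δD.naturality g
  have εDnat : ∀ {Y Y' : B} (g : Y ⟶ Y'),
      Df.map g ≫ εD.app Y' = εD.app Y ≫ g := fun g => εD.naturality g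
  -- pointwise limits
  have hi' := fun X => natForkIsLimit hi X
  have hj' := fun Y => natForkIsLimit hj Y
  have hq0 := fun X => natForkIsLimit hq X
  have hq'0 := fun X => natForkIsLimit hq' X
  have hr' := fun X => natForkIsLimit hr X
  have hs' := fun Y => natForkIsLimit hs Y
  -- mapped pointwise limits
  have hPi := fun X => isLimitForkMapOfIsLimit P _ (hi' X)
  have hQPi := fun X => isLimitForkMapOfIsLimit Q _ (hPi X)
  have hPQPi := fun X => isLimitForkMapOfIsLimit P _ (hQPi X)
  have hSPQPi := fun X => isLimitForkMapOfIsLimit S _ (hPQPi X)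
  have hQPQPi := fun X => isLimitForkMapOfIsLimit Q _ (hPQPi X)
  have hPQPQPi := fun X => isLimitForkMapOfIsLimit P _ (hQPQPi X)
  have hQj := fun Y => isLimitForkMapOfIsLimit Q _ (hj' Y)
  have hPQj := fun Y => isLimitForkMapOfIsLimit P _ (hQj Y)
  have hSPQj := fun Y => isLimitForkMapOfIsLimit S _ (hPQj Y)
  have hQPQj := fun Y => isLimitForkMapOfIsLimit Q _ (hPQj Y)
  have hPQPQj := fun Y => isLimitForkMapOfIsLimit P _ (hQPQj Y)
  have hQq' := fun X => isLimitForkMapOfIsLimit Q _ (hq'0 X)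
  have hPQq' := fun X => isLimitForkMapOfIsLimit P _ (hQq' X)
  have hSPQq' := fun X => isLimitForkMapOfIsLimit S _ (hPQq' X)
  have hQPQq' := fun X => isLimitForkMapOfIsLimit Q _ (hPQq' X)
  have hPQPQq' := fun X => isLimitForkMapOfIsLimit P _ (hQPQq' X)
  have hPr := fun X => isLimitForkMapOfIsLimit P _ (hr' X)
  have hQPr := fun X => isLimitForkMapOfIsLimit Q _ (hPr X)
  -- pointwise versions of the fork conditions
  have wiX : ∀ X : A, i.app X ≫ ωl.app X = i.app X ≫ ωr.app X :=
    fun X => congrArg (fun α => NatTrans.app α X) wi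
  have wjY : ∀ Y : B, j.app Y ≫ θl.app Y = j.app Y ≫ θr.app Y :=
    fun Y => congrArg (fun α => NatTrans.app α Y) wj
  have wqX : ∀ X : A, q.app X ≫ P.map (i.app X) ≫ θl.app (P.obj X) =
      q.app X ≫ P.map (i.app X) ≫ θr.app (P.obj X) := by
    intro X
    have h := congrArg (fun α => NatTrans.app α X) wq
    simp only [NatTrans.comp_app] at h
    rw [hφl, hφr] at h
    simpa using h
  have wq'X : ∀ X : A, q'.app X ≫ j.app (P.obj X) ≫ P.map (ωl.app X) =
      q'.app X ≫ j.app (P.obj X) ≫ P.map (ωr.app X) := by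
    intro X
    have h := congrArg (fun α => NatTrans.app α X) wq'
    simp only [NatTrans.comp_app] at h
    rw [hψl, hψr] at h
    simpa using h
  -- the fundamental identities E1 (for C) and E1D (for D)
  have E1 : ∀ X : A, δC.app X ≫ i.app (Cf.obj X) ≫ Q.map (P.map (i.app X)) =
      i.app X ≫ τ.app (P.obj X) := by
    intro X
    rw [← inat (i.app X)]
    exact hδC X
  have E1D : ∀ Y : B, δD.app Y ≫ j.app (Df.obj Y) ≫ P.map (Q.map (j.app Y)) =
      j.app Y ≫ P.map (τ.app Y) := by
    intro Y
    rw [← jnat (j.app Y)]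
    exact hδD Y
  -- derived comonad laws
  have δCco : ∀ X : A, δC.app X ≫ Cf.map (δC.app X) = δC.app X ≫ δC.app (Cf.obj X) := by
    intro X
    apply ecancel (hi' (Cf.obj (Cf.obj X)))
    apply ecancel (hQPi (Cf.obj X))
    apply ecancel (hQPQPi X)
    have e1 := inat (δC.app X)
    have e3 := τnat (P.map (i.app X))
    simp only [Functor.comp_obj] at e1 e3
    simp only [Category.assoc]
    conv_lhs => rw [reassoc_of% e1]
    conv_lhs => simp only [← Functor.map_comp_assoc, ← Functor.map_comp, Category.assoc]
    conv_lhs => rw [E1 X]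
    conv_lhs => simp only [Functor.map_comp, Category.assoc]
    conv_lhs => rw [reassoc_of% (E1 X), hτ (P.obj X)]
    conv_rhs => rw [reassoc_of% (E1 (Cf.obj X)), ← e3, reassoc_of% (E1 X)]
  have δCcu : ∀ X : A, δC.app X ≫ Cf.map (εC.app X) = 𝟙 (Cf.obj X) := by
    intro X
    apply ecancel (hi' X)
    apply ecancel (hQPr X)
    have e := inat (εC.app X)
    simp only [Functor.id_obj] at e
    simp only [Category.assoc, Category.id_comp]
    conv_lhs => rw [reassoc_of% e]
    conv_lhs => simp only [← Functor.map_comp_assoc, ← Functor.map_comp, Category.assoc]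
    conv_lhs => rw [hεC X]
    conv_lhs => simp only [Functor.map_comp, Category.assoc]
    conv_lhs => rw [reassoc_of% (E1 X), ← hωl X, wiX X, hωr X]
  have δDcu : ∀ Y : B, δD.app Y ≫ εD.app (Df.obj Y) = 𝟙 (Df.obj Y) := by
    intro Y
    apply ecancel (hj' Y)
    apply ecancel (hs' (P.obj (Q.obj Y)))
    have e := εDnat (j.app Y)
    simp only [Functor.comp_obj, Functor.id_obj] at e
    simp only [Category.assoc, Category.id_comp]
    conv_lhs => rw [← reassoc_of% e, hεD (P.obj (Q.obj Y)),
      reassoc_of% (hδD Y), ← hθl Y, wjY Y, hθr Y]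
  -- the key "equalizing after τ" lemmas
  have TT : ∀ (Y : B) {W : B} (m : W ⟶ P.obj (Q.obj Y)),
      m ≫ θl.app Y = m ≫ θr.app Y →
      m ≫ P.map (τ.app Y) ≫ θl.app (P.obj (Q.obj Y)) =
        m ≫ P.map (τ.app Y) ≫ θr.app (P.obj (Q.obj Y)) := by
    intro Y W m hm
    rw [hθl (P.obj (Q.obj Y)), hθr (P.obj (Q.obj Y))]
    rw [← Functor.map_comp_assoc, ← hτ Y, Functor.map_comp]
    simp only [Category.assoc]
    have ez := znat (P.map (τ.app Y))
    simp only [Functor.comp_obj] at ez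
    have es := snat (P.map (τ.app Y))
    simp only [Functor.comp_obj] at es
    rw [ez, ← reassoc_of% (hθl Y), reassoc_of% hm, hθr Y, ← es]
  have L1 : ∀ Y : B, τ.app Y ≫ Q.map (θl.app Y) = τ.app Y ≫ Q.map (θr.app Y) := by
    intro Y
    rw [hθl Y, hθr Y, Functor.map_comp, ← Category.assoc, hτ Y, Category.assoc,
      hz (P.obj (Q.obj Y))]
  have key1 : ∀ X : A, τ.app (P.obj X) ≫ Q.map (P.map (ωl.app X)) =
      ωl.app X ≫ τ.app (P.obj (Rf.obj X)) := by
    intro X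
    rw [hωl X]
    simp only [Functor.map_comp, Category.assoc]
    have e := τnat (P.map (w.app X))
    simp only [Functor.comp_obj] at e
    rw [← Category.assoc, hτ (P.obj X), Category.assoc, ← e]
  have key2 : ∀ X : A, τ.app (P.obj X) ≫ Q.map (P.map (ωr.app X)) =
      ωr.app X ≫ τ.app (P.obj (Rf.obj X)) := by
    intro X
    rw [hωr X]
    have rn := τnat (P.map (r.app X))
    simp only [Functor.id_obj] at rn
    rw [← rn]
  -- construction of u and the components of ν.hom
  have ucond : ∀ X : A, (q'.app X ≫ j.app (P.obj X)) ≫ P.map (ωl.app X) =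
      (q'.app X ≫ j.app (P.obj X)) ≫ P.map (ωr.app X) := by
    intro X; simpa using wq'X X
  let u : ∀ X : A, Qb'.obj X ⟶ P.obj (Cf.obj X) :=
    fun X => elift (hPi X) _ (ucond X)
  have ufac : ∀ X : A, u X ≫ P.map (i.app X) = q'.app X ≫ j.app (P.obj X) :=
    fun X => elift_fac (hPi X) _ (ucond X)
  have vhcond : ∀ X : A, u X ≫ φl.app X = u X ≫ φr.app X := by
    intro X
    rw [hφl X, hφr X, ← Category.assoc, ufac X, Category.assoc, wjY (P.obj X),
      ← Category.assoc, ← ufac X, Category.assoc]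
  let νh : ∀ X : A, Qb'.obj X ⟶ Qb.obj X :=
    fun X => elift (hq0 X) (u X) (vhcond X)
  have νhfac : ∀ X : A, νh X ≫ q.app X = u X :=
    fun X => elift_fac (hq0 X) (u X) (vhcond X)
  -- construction of v and the components of ν.inv
  have vcond : ∀ X : A, (q.app X ≫ P.map (i.app X)) ≫ θl.app (P.obj X) =
      (q.app X ≫ P.map (i.app X)) ≫ θr.app (P.obj X) := by
    intro X; simpa using wqX X
  let v : ∀ X : A, Qb.obj X ⟶ Df.obj (P.obj X) :=
    fun X => elift (hj' (P.obj X)) _ (vcond X)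
  have vfac : ∀ X : A, v X ≫ j.app (P.obj X) = q.app X ≫ P.map (i.app X) :=
    fun X => elift_fac (hj' (P.obj X)) _ (vcond X)
  have vicond : ∀ X : A, v X ≫ ψl.app X = v X ≫ ψr.app X := by
    intro X
    rw [hψl X, hψr X, ← Category.assoc, vfac X, Category.assoc, ← Functor.map_comp,
      wiX X, Functor.map_comp, ← Category.assoc, ← vfac X, Category.assoc]
  let νi : ∀ X : A, Qb.obj X ⟶ Qb'.obj X :=
    fun X => elift (hq'0 X) (v X) (vicond X)
  have νifac : ∀ X : A, νi X ≫ q'.app X = v X :=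
    fun X => elift_fac (hq'0 X) (v X) (vicond X)
  -- naturality of u and νh
  have unat : ∀ {X X' : A} (f : X ⟶ X'),
      u X ≫ P.map (Cf.map f) = Qb'.map f ≫ u X' := by
    intro X X' f
    apply ecancel (hPi X')
    simp only [Category.assoc]
    rw [← Functor.map_comp, inat f, Functor.map_comp, reassoc_of% (ufac X),
      ← jnat (P.map f), ← reassoc_of% (q'nat f), ufac X']
  have νhnat : ∀ {X X' : A} (f : X ⟶ X'),
      Qb'.map f ≫ νh X' = νh X ≫ Qb.map f := by
    intro X X' f
    apply ecancel (hq0 X')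
    simp only [Category.assoc]
    rw [νhfac X', qnat f, ← unat f, ← Category.assoc, νhfac X]
  have vnat : ∀ {X X' : A} (f : X ⟶ X'),
      v X ≫ Df.map (P.map f) = Qb.map f ≫ v X' := by
    intro X X' f
    apply ecancel (hj' (P.obj X'))
    simp only [Category.assoc]
    rw [jnat (P.map f), reassoc_of% (vfac X), ← Functor.map_comp, ← inat f,
      Functor.map_comp, ← reassoc_of% (qnat f), vfac X']
  have νinat : ∀ {X X' : A} (f : X ⟶ X'),
      Qb.map f ≫ νi X' = νi X ≫ Qb'.map f := by
    intro X X' f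
    apply ecancel (hq'0 X')
    simp only [Category.assoc]
    rw [νifac X', q'nat f, ← vnat f, ← Category.assoc, νifac X]
  have hiv : ∀ X : A, νh X ≫ νi X = 𝟙 (Qb'.obj X) := by
    intro X
    apply ecancel (hq'0 X)
    apply ecancel (hj' (P.obj X))
    simp only [Category.assoc, Category.id_comp]
    rw [reassoc_of% (νifac X), vfac X, ← Category.assoc, νhfac X, ufac X]
  have hvi : ∀ X : A, νi X ≫ νh X = 𝟙 (Qb.obj X) := by
    intro X
    apply ecancel (hq0 X)
    apply ecancel (hPi X)
    simp only [Category.assoc, Category.id_comp]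
    rw [reassoc_of% (νhfac X), ufac X, ← Category.assoc, νifac X, vfac X]
  -- the natural isomorphism ν
  refine ⟨⟨⟨νh, fun {X X'} f => νhnat f⟩, ⟨νi, fun {X X'} f => νinat f⟩,
    by ext X; exact hiv X, by ext X; exact hvi X⟩, fun X => ?_, ?_⟩
  · rw [← Category.assoc]
    show (νh X ≫ q.app X) ≫ P.map (i.app X) = _
    rw [νhfac X, ufac X]
  -- the C-coaction cbar
  have ccond : ∀ X : A, (q.app X ≫ P.map (δC.app X)) ≫ φl.app (Cf.obj X) =
      (q.app X ≫ P.map (δC.app X)) ≫ φr.app (Cf.obj X) := by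
    intro X
    rw [hφl (Cf.obj X), hφr (Cf.obj X)]
    apply ecancel (hSPQPi X)
    have e := θlnat (P.map (i.app X))
    have e' := θrnat (P.map (i.app X))
    simp only [Functor.comp_obj] at e e'
    simp only [Category.assoc]
    rw [← e, ← e']
    conv_lhs => simp only [← Functor.map_comp_assoc, ← Functor.map_comp, Category.assoc]
    conv_rhs => simp only [← Functor.map_comp_assoc, ← Functor.map_comp, Category.assoc]
    simp only [E1 X]
    simp only [Functor.map_comp, Category.assoc]
    have hm : (q.app X ≫ P.map (i.app X)) ≫ θl.app (P.obj X) =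
        (q.app X ≫ P.map (i.app X)) ≫ θr.app (P.obj X) := by
      simp only [Category.assoc]; rw [wqX X]
    have := TT (P.obj X) (q.app X ≫ P.map (i.app X)) hm
    simpa using this
  let c : ∀ X : A, Qb.obj X ⟶ Qb.obj (Cf.obj X) :=
    fun X => elift (hq0 (Cf.obj X)) _ (ccond X)
  have cfac : ∀ X : A, c X ≫ q.app (Cf.obj X) = q.app X ≫ P.map (δC.app X) :=
    fun X => elift_fac (hq0 (Cf.obj X)) _ (ccond X)
  have cnat : ∀ {X X' : A} (f : X ⟶ X'),
      Qb.map f ≫ c X' = c X ≫ Qb.map (Cf.map f) := by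
    intro X X' f
    apply ecancel (hq0 (Cf.obj X'))
    simp only [Category.assoc]
    rw [cfac X', reassoc_of% (qnat f), ← Functor.map_comp, δCnat f, Functor.map_comp,
      qnat (Cf.map f), reassoc_of% (cfac X)]
  -- the liftings producing the D-coaction on Qb'
  have k1cond : ∀ X : A, (q'.app X ≫ j.app (P.obj X) ≫ P.map (τ.app (P.obj X))) ≫ P.map (Q.map (θl.app (P.obj X))) =
      (q'.app X ≫ j.app (P.obj X) ≫ P.map (τ.app (P.obj X))) ≫ P.map (Q.map (θr.app (P.obj X))) := by
    intro X
    simp only [Category.assoc]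
    rw [← Functor.map_comp, L1 (P.obj X), Functor.map_comp]
  let k1 : ∀ X : A, Qb'.obj X ⟶ P.obj (Q.obj (Df.obj (P.obj X))) :=
    fun X => elift (hPQj (P.obj X)) (q'.app X ≫ j.app (P.obj X) ≫ P.map (τ.app (P.obj X))) (k1cond X)
  have k1fac : ∀ X : A, k1 X ≫ P.map (Q.map (j.app (P.obj X))) = (q'.app X ≫ j.app (P.obj X) ≫ P.map (τ.app (P.obj X))) :=
    fun X => elift_fac (hPQj (P.obj X)) (q'.app X ≫ j.app (P.obj X) ≫ P.map (τ.app (P.obj X))) (k1cond X)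
  have k2cond : ∀ X : A, k1 X ≫ P.map (Q.map (ψl.app X)) =
      k1 X ≫ P.map (Q.map (ψr.app X)) := by
    intro X
    rw [hψl X, hψr X]
    simp only [Functor.map_comp, Category.assoc]
    simp only [reassoc_of% (k1fac X)]
    conv_lhs => rw [← Functor.map_comp, key1 X, Functor.map_comp]
    conv_rhs => rw [← Functor.map_comp, key2 X, Functor.map_comp]
    rw [reassoc_of% (wq'X X)]
  let k2 : ∀ X : A, Qb'.obj X ⟶ P.obj (Q.obj (Qb'.obj X)) :=
    fun X => elift (hPQq' X) (k1 X) (k2cond X)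
  have k2fac : ∀ X : A, k2 X ≫ P.map (Q.map (q'.app X)) = k1 X :=
    fun X => elift_fac (hPQq' X) (k1 X) (k2cond X)
  have d'cond : ∀ X : A, k2 X ≫ θl.app (Qb'.obj X) = k2 X ≫ θr.app (Qb'.obj X) := by
    intro X
    apply ecancel (hSPQq' X)
    apply ecancel (hSPQj (P.obj X))
    have e := θlnat (q'.app X)
    have e2 := θlnat (j.app (P.obj X))
    have e' := θrnat (q'.app X)
    have e2' := θrnat (j.app (P.obj X))
    simp only [Functor.comp_obj] at e e2 e' e2'
    simp only [Category.assoc]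
    rw [← reassoc_of% e, ← e2, ← reassoc_of% e', ← e2']
    simp only [reassoc_of% (k2fac X)]
    simp only [reassoc_of% (k1fac X)]
    have hm : (q'.app X ≫ j.app (P.obj X)) ≫ θl.app (P.obj X) =
        (q'.app X ≫ j.app (P.obj X)) ≫ θr.app (P.obj X) := by
      simp only [Category.assoc]; rw [wjY (P.obj X)]
    have := TT (P.obj X) (q'.app X ≫ j.app (P.obj X)) hm
    simpa using this
  let d' : ∀ X : A, Qb'.obj X ⟶ Df.obj (Qb'.obj X) :=
    fun X => elift (hj' (Qb'.obj X)) (k2 X) (d'cond X)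
  have d'fac : ∀ X : A, d' X ≫ j.app (Qb'.obj X) = k2 X :=
    fun X => elift_fac (hj' (Qb'.obj X)) (k2 X) (d'cond X)
  have FactA : ∀ X : A, d' X ≫ j.app (Qb'.obj X) ≫ P.map (Q.map (q'.app X)) ≫
      P.map (Q.map (j.app (P.obj X))) = (q'.app X ≫ j.app (P.obj X) ≫ P.map (τ.app (P.obj X))) := by
    intro X
    rw [← Category.assoc, ← Category.assoc, d'fac X, k2fac X, k1fac X]
  have FactA' : ∀ X : A, d' X ≫ j.app (Qb'.obj X) ≫
      P.map (Q.map (q'.app X ≫ j.app (P.obj X))) = (q'.app X ≫ j.app (P.obj X) ≫ P.map (τ.app (P.obj X))) := by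
    intro X
    simp only [Functor.map_comp, Category.assoc]
    exact FactA X
  have d'q' : ∀ X : A, d' X ≫ Df.map (q'.app X) = q'.app X ≫ δD.app (P.obj X) := by
    intro X
    apply ecancel (hj' (Df.obj (P.obj X)))
    apply ecancel (hPQj (P.obj X))
    have e := jnat (q'.app X)
    have e2 := jnat (j.app (P.obj X))
    simp only [Functor.comp_obj] at e e2
    simp only [Category.assoc]
    rw [reassoc_of% e, FactA X, ← e2, hδD (P.obj X)]
  have d'nat : ∀ {X X' : A} (f : X ⟶ X'),
      Qb'.map f ≫ d' X' = d' X ≫ Df.map (Qb'.map f) := by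
    intro X X' f
    apply ecancel (hj' (Qb'.obj X'))
    apply ecancel (hPQq' X')
    apply ecancel (hPQj (P.obj X'))
    have e1 := jnat (Qb'.map f)
    have e2 := jnat (P.map f)
    have e3 := τnat (P.map f)
    simp only [Category.assoc]
    rw [FactA X', reassoc_of% e1]
    conv_rhs => simp only [← Functor.map_comp_assoc, ← Functor.map_comp, Category.assoc]
    conv_rhs => rw [reassoc_of% (q'nat f), e2]
    conv_rhs => simp only [Functor.map_comp, Category.assoc]
    rw [reassoc_of% (FactA X)]
    conv_rhs => rw [← Functor.map_comp, ← e3, Functor.map_comp]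
    conv_rhs => rw [← reassoc_of% e2, ← reassoc_of% (q'nat f)]
  have d'co : ∀ X : A, d' X ≫ Df.map (d' X) = d' X ≫ δD.app (Qb'.obj X) := by
    intro X
    apply ecancel (hj' (Df.obj (Qb'.obj X)))
    apply ecancel (hPQj (Qb'.obj X))
    apply ecancel (hPQPQq' X)
    apply ecancel (hPQPQj (P.obj X))
    have e1 := jnat (d' X)
    have e2 := jnat (j.app (Qb'.obj X))
    have e34 := τnat (q'.app X ≫ j.app (P.obj X))
    simp only [Functor.comp_obj] at e1 e2 e34
    simp only [Category.assoc]
    conv_lhs => rw [reassoc_of% e1]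
    conv_lhs => simp only [← Functor.map_comp_assoc, ← Functor.map_comp, Category.assoc]
    conv_lhs => rw [FactA' X]
    conv_lhs => simp only [Functor.map_comp, Category.assoc]
    conv_lhs => rw [reassoc_of% (FactA X)]
    conv_lhs => simp only [← Functor.map_comp_assoc, ← Functor.map_comp, Category.assoc]
    conv_lhs => rw [hτ (P.obj X)]
    conv_rhs => rw [← reassoc_of% e2, reassoc_of% (hδD (Qb'.obj X))]
    conv_rhs => simp only [← Functor.map_comp_assoc, ← Functor.map_comp, Category.assoc]
    conv_rhs => rw [← e34]
    conv_rhs => simp only [Functor.map_comp, Category.assoc]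
    conv_rhs => rw [reassoc_of% (FactA X)]
    conv_rhs => simp only [← Functor.map_comp_assoc, ← Functor.map_comp, Category.assoc]
  have d'cu : ∀ X : A, d' X ≫ εD.app (Qb'.obj X) = 𝟙 (Qb'.obj X) := by
    intro X
    apply ecancel (hq'0 X)
    have e := εDnat (q'.app X)
    simp only [Functor.comp_obj, Functor.id_obj] at e
    simp only [Category.assoc, Category.id_comp]
    rw [← e, reassoc_of% (d'q' X), δDcu (P.obj X), Category.comp_id]
  -- the primed C-coaction on Qb' and its compatibility
  let cb' : ∀ X : A, Qb'.obj X ⟶ Qb'.obj (Cf.obj X) :=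
    fun X => νh X ≫ c X ≫ νi (Cf.obj X)
  have FactG : ∀ X : A, cb' X ≫ q'.app (Cf.obj X) ≫ j.app (P.obj (Cf.obj X)) ≫
      P.map (Q.map (P.map (i.app X))) = (q'.app X ≫ j.app (P.obj X) ≫ P.map (τ.app (P.obj X))) := by
    intro X
    show (νh X ≫ c X ≫ νi (Cf.obj X)) ≫ q'.app (Cf.obj X) ≫ j.app (P.obj (Cf.obj X)) ≫
      P.map (Q.map (P.map (i.app X))) = _
    simp only [Category.assoc]
    rw [reassoc_of% (νifac (Cf.obj X)), reassoc_of% (vfac (Cf.obj X)),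
      reassoc_of% (cfac X)]
    conv_lhs => simp only [← Functor.map_comp_assoc, ← Functor.map_comp, Category.assoc]
    conv_lhs => rw [E1 X]
    conv_lhs => simp only [Functor.map_comp, Category.assoc]
    rw [reassoc_of% (νhfac X), reassoc_of% (ufac X)]
  have dccomm' : ∀ X : A, d' X ≫ Df.map (cb' X) = cb' X ≫ d' (Cf.obj X) := by
    intro X
    apply ecancel (hj' (Qb'.obj (Cf.obj X)))
    apply ecancel (hPQq' (Cf.obj X))
    apply ecancel (hPQj (P.obj (Cf.obj X)))
    apply ecancel (hPQPQPi X)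
    have e1 := jnat (cb' X)
    have e4 := τnat (P.map (i.app X))
    simp only [Functor.comp_obj] at e1 e4
    simp only [Category.assoc]
    conv_lhs => rw [reassoc_of% e1]
    conv_lhs => simp only [← Functor.map_comp_assoc, ← Functor.map_comp, Category.assoc]
    conv_lhs => rw [FactG X]
    conv_lhs => simp only [Functor.map_comp, Category.assoc]
    conv_lhs => rw [reassoc_of% (FactA X)]
    conv_lhs => simp only [← Functor.map_comp_assoc, ← Functor.map_comp, Category.assoc]
    conv_lhs => rw [hτ (P.obj X)]
    conv_rhs => rw [reassoc_of% (FactA (Cf.obj X))]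
    conv_rhs => simp only [← Functor.map_comp_assoc, ← Functor.map_comp, Category.assoc]
    conv_rhs => rw [← e4]
    conv_rhs => simp only [Functor.map_comp, Category.assoc]
    conv_rhs => rw [reassoc_of% (FactG X)]
    conv_rhs => simp only [← Functor.map_comp_assoc, ← Functor.map_comp, Category.assoc]
  -- assemble the coactions on Qb
  refine ⟨⟨c, fun {X X'} f => cnat f⟩,
    ⟨fun X => νi X ≫ d' X ≫ Df.map (νh X), ?_⟩, fun X => cfac X, fun X => ?_,
    fun X => ?_, fun X => ?_, fun X => ?_, fun X => ?_, fun X => ?_⟩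
  · -- naturality of dbar
    intro X X' f
    show Qb.map f ≫ νi X' ≫ d' X' ≫ Df.map (νh X') =
      (νi X ≫ d' X ≫ Df.map (νh X)) ≫ Df.map (Qb.map f)
    rw [← Category.assoc, νinat f, Category.assoc, ← Category.assoc (Qb'.map f),
      d'nat f, Category.assoc, ← Functor.map_comp, νhnat f, Functor.map_comp]
    simp only [Category.assoc]
  · -- defining equation of the D-coaction
    show (νi X ≫ d' X ≫ Df.map (νh X)) ≫ Df.map (νi X ≫ q'.app X) =
      νi X ≫ q'.app X ≫ δD.app (P.obj X)
    rw [Functor.map_comp]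
    simp only [Category.assoc]
    rw [← Functor.map_comp_assoc, hiv X, CategoryTheory.Functor.map_id, Category.id_comp, d'q' X]
  · -- coassociativity of cbar
    show c X ≫ Qb.map (δC.app X) = c X ≫ c (Cf.obj X)
    apply ecancel (hq0 (Cf.obj (Cf.obj X)))
    have e := qnat (δC.app X)
    simp only [Functor.comp_obj] at e
    simp only [Category.assoc]
    rw [e, reassoc_of% (cfac X), ← Functor.map_comp, δCco X, Functor.map_comp,
      cfac (Cf.obj X), reassoc_of% (cfac X)]
  · -- counitality of cbar
    show c X ≫ Qb.map (εC.app X) = 𝟙 (Qb.obj X)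
    apply ecancel (hq0 X)
    have e := qnat (εC.app X)
    simp only [Functor.id_obj] at e
    simp only [Category.assoc, Category.id_comp]
    rw [e, reassoc_of% (cfac X), ← Functor.map_comp, δCcu X,
      CategoryTheory.Functor.map_id, Category.comp_id]
  · -- coassociativity of dbar
    show (νi X ≫ d' X ≫ Df.map (νh X)) ≫ Df.map (νi X ≫ d' X ≫ Df.map (νh X)) =
      (νi X ≫ d' X ≫ Df.map (νh X)) ≫ δD.app (Qb.obj X)
    rw [Functor.map_comp, Functor.map_comp]
    simp only [Category.assoc]
    rw [← Functor.map_comp_assoc, hiv X, CategoryTheory.Functor.map_id,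
      Category.id_comp, reassoc_of% (d'co X), ← δDnat (νh X)]
  · -- counitality of dbar
    show (νi X ≫ d' X ≫ Df.map (νh X)) ≫ εD.app (Qb.obj X) = 𝟙 (Qb.obj X)
    simp only [Category.assoc]
    rw [εDnat (νh X), ← Category.assoc (d' X), d'cu X, Category.id_comp, hvi X]
  · -- the coactions commute
    show (νi X ≫ d' X ≫ Df.map (νh X)) ≫ Df.map (c X) =
      c X ≫ νi (Cf.obj X) ≫ d' (Cf.obj X) ≫ Df.map (νh (Cf.obj X))
    have e1 : νh X ≫ c X = cb' X ≫ νh (Cf.obj X) := by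
      show _ = (νh X ≫ c X ≫ νi (Cf.obj X)) ≫ νh (Cf.obj X)
      simp only [Category.assoc]
      rw [hvi (Cf.obj X), Category.comp_id]
    simp only [Category.assoc]
    rw [← Functor.map_comp, e1, Functor.map_comp, ← Category.assoc (d' X), dccomm' X]
    show νi X ≫ (cb' X ≫ d' (Cf.obj X)) ≫ Df.map (νh (Cf.obj X)) = _
    show νi X ≫ ((νh X ≫ c X ≫ νi (Cf.obj X)) ≫ d' (Cf.obj X)) ≫
      Df.map (νh (Cf.obj X)) = _
    simp only [Category.assoc]
    rw [← Category.assoc (νi X), hvi X, Category.id_comp]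
end
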